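/- arXiv:2301.03776 — 2 statements merged into one kernel-verified Lean document; each statement's English description precedes it below -/
import Mathlib

section
/- Let M be a saturated matroid, let H be a modular hyperplane of M, and let C* = E(M)−H be the complementary cocircuit. If C* is non-spanning, then (H, cl(C*)) is a modular cover of M. -/
open Set

namespace Matroid

variable {α : Type*} {β : Type*}

/-- The rank of a set in a matroid: the supremum of sizes of independent subsets. -/
noncomputable def mRank (M : Matroid α) (X : Set α) : ℕ :=
  sSup {n : ℕ | ∃ I, M.Indep I ∧ I ⊆ X ∧ I.ncard = n}

/-- The rank of a matroid. -/
noncomputable def mRk (M : Matroid α) : ℕ := M.mRank M.E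

/-- A flat `F` is modular if `r F + r F' = r (F ∪ F') + r (F ∩ F')` for every flat `F'`. -/
def IsModularFlat (M : Matroid α) (F : Set α) : Prop :=
  M.IsFlat F ∧ ∀ F', M.IsFlat F' →
    M.mRank F + M.mRank F' = M.mRank (F ∪ F') + M.mRank (F ∩ F')

/-- A proper flat is a flat other than the ground set. -/
def IsProperFlat (M : Matroid α) (F : Set α) : Prop := M.IsFlat F ∧ F ≠ M.E

/-- A vertical cover is a pair of proper flats whose union is the ground set. -/
def VerticalCover (M : Matroid α) (F F' : Set α) : Prop :=
  M.IsProperFlat F ∧ M.IsProperFlat F' ∧ F ∪ F' = M.E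

/-- A modular cover is a vertical cover by two modular flats. -/
def ModularCover (M : Matroid α) (F F' : Set α) : Prop :=
  M.VerticalCover F F' ∧ M.IsModularFlat F ∧ M.IsModularFlat F'

/-- A matroid is round if it has no vertical cover. -/
def Round (M : Matroid α) : Prop := ∀ F F', ¬ M.VerticalCover F F'

/-- A subset of the ground set is round if the restriction to it is round. -/
def RoundSet (M : Matroid α) (X : Set α) : Prop := X ⊆ M.E ∧ (M ↾ X).Round

/-- A rotunda is a maximal round flat. -/
def Rotunda (M : Matroid α) (R : Set α) : Prop :=
  M.IsFlat R ∧ M.RoundSet R ∧ ∀ R', M.IsFlat R' → M.RoundSet R' → R ⊆ R' → R' = R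

/-- A matroid of rank `r` is supersolvable if there is a chain of modular flats
`F 0 ⊆ F 1 ⊆ ⋯ ⊆ F r` with `r (F i) = i` for each `i`. -/
def Supersolvable (M : Matroid α) : Prop :=
  ∃ F : ℕ → Set α, (∀ i ≤ M.mRk, M.IsModularFlat (F i) ∧ M.mRank (F i) = i) ∧
    ∀ i < M.mRk, F i ⊆ F (i + 1)

/-- A matroid is saturated if every round flat is modular. -/
def Saturated (M : Matroid α) : Prop :=
  ∀ F, M.IsFlat F → M.RoundSet F → M.IsModularFlat F

/-- A circuit: a minimal dependent subset of the ground set. -/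
def Circ (M : Matroid α) (C : Set α) : Prop :=
  C ⊆ M.E ∧ ¬ M.Indep C ∧ ∀ D ⊂ C, M.Indep D

/-- A matroid is connected if it is non-empty and every two distinct elements lie in a
common circuit. -/
def ConnectedM (M : Matroid α) : Prop :=
  M.E.Nonempty ∧ ∀ x ∈ M.E, ∀ y ∈ M.E, x = y ∨ ∃ C, M.Circ C ∧ x ∈ C ∧ y ∈ C

/-- A hyperplane: a flat of rank `r M - 1`. -/
def IsHyperplane (M : Matroid α) (H : Set α) : Prop :=
  M.IsFlat H ∧ M.mRank H + 1 = M.mRk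

/-- The union of the projections `P_H(x, y) = H ∩ cl (x ∪ y)` onto the modular hyperplane `H`,
taken over all pairs of distinct rank-one flats `x = cl {a}`, `y = cl {b}` spanned by
elements `a, b` of `X`. -/
def projUnion (M : Matroid α) (H X : Set α) : Set α :=
  ⋃ a ∈ X, ⋃ b ∈ X, ⋃ (_ : M.closure {a} ≠ M.closure {b}), H ∩ M.closure {a, b}

/-- Two elements are related if they are equal or lie in a common circuit; the connected
components of a matroid are the restrictions to the equivalence classes of this relation. -/
def connRel (M : Matroid α) (x y : α) : Prop :=
  x = y ∨ ∃ C, M.Circ C ∧ x ∈ C ∧ y ∈ C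

/-- The rotunda graph of a matroid: vertices are the rotunda; two rotunda are adjacent if
they intersect and there is a modular cover separating them at their intersection. -/
def rotundaGraph (M : Matroid α) : SimpleGraph {R : Set α // M.Rotunda R} where
  Adj R₁ R₂ := R₁ ≠ R₂ ∧ (R₁.1 ∩ R₂.1).Nonempty ∧
    ∃ F₁ F₂, M.ModularCover F₁ F₂ ∧ R₁.1 ⊆ F₁ ∧ R₂.1 ⊆ F₂ ∧ F₁ ∩ F₂ = R₁.1 ∩ R₂.1
  symm := ⟨by
    rintro a b ⟨hne, hint, F₁, F₂, ⟨⟨hp1, hp2, hu⟩, hm1, hm2⟩, h1, h2, hi⟩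
    refine ⟨hne.symm, by rwa [Set.inter_comm], F₂, F₁,
      ⟨⟨hp2, hp1, by rwa [Set.union_comm]⟩, hm2, hm1⟩, h2, h1, ?_⟩
    rw [Set.inter_comm, hi, Set.inter_comm]⟩
  loopless := ⟨fun a h => h.1 rfl⟩

/-- A rotunda tree of `M`: a tree on the rotunda of `M` such that for each element `x` of the
ground set, the rotunda containing `x` induce a (nonempty) subtree. -/
def IsRotundaTree (M : Matroid α) (T : SimpleGraph {R : Set α // M.Rotunda R}) : Prop :=
  T.IsTree ∧ ∀ x ∈ M.E, (T.induce {t : {R : Set α // M.Rotunda R} | x ∈ t.1}).Connected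

/-- A legitimate weighting of `M`: zero on the empty set, and strictly monotone under proper
inclusion on the set consisting of `∅` and the pairwise intersections of distinct rotunda. -/
def LegitimateWeighting (M : Matroid α) (σ : Set α → ℕ) : Prop :=
  σ ∅ = 0 ∧
  ∀ X X' : Set α,
    (X = ∅ ∨ ∃ R R', M.Rotunda R ∧ M.Rotunda R' ∧ R ≠ R' ∧ X = R ∩ R') →
    (X' = ∅ ∨ ∃ R R', M.Rotunda R ∧ M.Rotunda R' ∧ R ≠ R' ∧ X' = R ∩ R') →
    X ⊂ X' → σ X < σ X'

/-- The total weight of a graph on the rotunda of `M`, where the edge joining rotunda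
`R` and `R'` gets weight `σ (R ∩ R')`. -/
noncomputable def treeWeight {M : Matroid α} (σ : Set α → ℕ)
    (T : SimpleGraph {R : Set α // M.Rotunda R}) : ℕ :=
  ∑ᶠ e ∈ T.edgeSet,
    Sym2.lift ⟨fun a b => σ (a.1 ∩ b.1), fun a b => by simp [Set.inter_comm]⟩ e

/-- A tree-decomposition of a matroid: a tree together with bags covering the ground set. -/
def IsTreeDecomp (M : Matroid α) (T : SimpleGraph β) (τ : β → Set α) : Prop :=
  T.IsTree ∧ ∀ x ∈ M.E, ∃ t, x ∈ τ t

/-- The node-width of a node `t` in a tree-decomposition `(T, τ)` of `M`: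
`(Σ_i r (τ t ∪ ⋃_{k ≠ i} F_k)) − (d − 1) · r M`, where `F_1, …, F_d` are the unions of the
bags over the connected components of `T − t`. -/
noncomputable def nodeWidth (M : Matroid α) (T : SimpleGraph β) (τ : β → Set α) (t : β) : ℤ :=
  (∑ᶠ c : (T.induce {s : β | s ≠ t}).ConnectedComponent,
      (M.mRank (τ t ∪ ⋃ (s : {s : β // s ≠ t})
        (_ : (T.induce {s : β | s ≠ t}).connectedComponentMk s ≠ c), τ s.1) : ℤ))
    - ((Nat.card (T.induce {s : β | s ≠ t}).ConnectedComponent : ℤ) - 1) * (M.mRk : ℤ)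

/-- The width of a tree-decomposition: the maximum node-width. -/
noncomputable def decompWidth (M : Matroid α) (T : SimpleGraph β) (τ : β → Set α) : ℤ :=
  sSup (Set.range (M.nodeWidth T τ))

/-- The tree-width of a matroid: the minimum width of a (finite) tree-decomposition. -/
noncomputable def treeWidth (M : Matroid α) : ℕ :=
  sInf {n : ℕ | ∃ (β : Type) (T : SimpleGraph β) (τ : β → Set α),
    Finite β ∧ M.IsTreeDecomp T τ ∧ ∀ t, M.nodeWidth T τ t ≤ (n : ℤ)}

end Matroid

namespace SimpleGraph

/-- A graph is chordal if every cycle with at least four edges has a chord: an edge of the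
graph joining two vertices of the cycle that is not an edge of the cycle. -/
def IsChordal {V : Type*} (G : SimpleGraph V) : Prop :=
  ∀ ⦃v : V⦄ (w : G.Walk v v), w.IsCycle → 4 ≤ w.length →
    ∃ x y, x ∈ w.support ∧ y ∈ w.support ∧ G.Adj x y ∧ s(x, y) ∉ w.edges

/-- A maximal clique of a graph. -/
def MaxClique {V : Type*} (G : SimpleGraph V) (C : Set V) : Prop :=
  G.IsClique C ∧ ∀ D, G.IsClique D → C ⊆ D → D = C

/-- The reduced clique graph of a graph: vertices are the maximal cliques; two maximal
cliques are adjacent if they intersect and every walk from one side to the other passes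
through their intersection. -/
def reducedCliqueGraph {V : Type*} (G : SimpleGraph V) :
    SimpleGraph {C : Set V // G.MaxClique C} where
  Adj C₁ C₂ := C₁ ≠ C₂ ∧ (C₁.1 ∩ C₂.1).Nonempty ∧
    ∀ u ∈ C₁.1 \ C₂.1, ∀ v ∈ C₂.1 \ C₁.1, ∀ p : G.Walk u v,
      ∃ z ∈ p.support, z ∈ C₁.1 ∩ C₂.1
  symm := ⟨by
    rintro a b ⟨hne, hint, hsep⟩
    refine ⟨hne.symm, by rwa [Set.inter_comm], fun u hu v hv p => ?_⟩
    obtain ⟨z, hz, hz2⟩ := hsep v hv u hu p.reverse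
    refine ⟨z, ?_, by rwa [Set.inter_comm]⟩
    simpa [SimpleGraph.Walk.support_reverse] using hz⟩
  loopless := ⟨fun a h => h.1 rfl⟩

end SimpleGraph

open Matroid

namespace MCAux

variable {α : Type*} {M : Matroid α} {X Y F I D : Set α} {p e : α}

/-- The closure of any set is a flat. -/
lemma flat_closure (M : Matroid α) (X : Set α) : M.IsFlat (M.closure X) := by
  rw [Matroid.closure_def, sInter_eq_iInter]
  have : Nonempty {F : Set α // F ∈ {F | M.IsFlat F ∧ X ∩ M.E ⊆ F}} :=
    ⟨⟨M.E, M.ground_isFlat, inter_subset_right⟩⟩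
  exact Matroid.IsFlat.iInter fun F => F.2.1

lemma flat_of_closure_eq (h : M.closure F = F) : M.IsFlat F := h ▸ flat_closure M F

/-- Closure in a restriction. -/
lemma restrict_closure_eq (hX : X ⊆ M.E) (hFX : F ⊆ X) :
    (M ↾ X).closure F = M.closure F ∩ X := by
  obtain ⟨I, hI⟩ := M.exists_isBasis F (hFX.trans hX)
  have hI' : (M ↾ X).IsBasis I F := hI.isBasis_restrict_of_subset hFX
  rw [← hI'.closure_eq_closure, hI'.indep.closure_eq_setOfPred_isBasis_insert,
    ← hI.closure_eq_closure, hI.indep.closure_eq_setOfPred_isBasis_insert]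
  ext x
  simp only [mem_setOf_eq, mem_inter_iff, Matroid.isBasis_restrict_iff hX, insert_subset_iff]
  constructor
  · rintro ⟨h1, h2, _⟩; exact ⟨h1, h2⟩
  · rintro ⟨h1, h2⟩; exact ⟨h1, h2, hI.subset.trans hFX⟩

/-- A flat of the restriction of `M` to one of its flats is a flat of `M`. -/
lemma flat_of_flat_restrict (hX : M.IsFlat X) (hF : (M ↾ X).IsFlat F) : M.IsFlat F := by
  have hFX : F ⊆ X := hF.subset_ground
  have h1 : (M ↾ X).closure F = F := hF.closure
  rw [restrict_closure_eq hX.subset_ground hFX] at h1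
  have h2 : M.closure F ⊆ X := (M.closure_subset_closure hFX).trans_eq hX.closure
  rw [inter_eq_self_of_subset_left h2] at h1
  exact flat_of_closure_eq h1

lemma mRank_set_nonempty (M : Matroid α) (X : Set α) :
    0 ∈ {n : ℕ | ∃ I, M.Indep I ∧ I ⊆ X ∧ I.ncard = n} :=
  ⟨∅, M.empty_indep, empty_subset _, by simp⟩

lemma mRank_set_bddAbove (M : Matroid α) [M.Finite] (X : Set α) :
    BddAbove {n : ℕ | ∃ I, M.Indep I ∧ I ⊆ X ∧ I.ncard = n} := by
  refine ⟨M.E.ncard, ?_⟩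
  rintro n ⟨I, hI, -, rfl⟩
  exact Set.ncard_le_ncard hI.subset_ground M.ground_finite

lemma exists_mRank (M : Matroid α) [M.Finite] (X : Set α) :
    ∃ I, M.Indep I ∧ I ⊆ X ∧ I.ncard = M.mRank X :=
  Nat.sSup_mem ⟨0, mRank_set_nonempty M X⟩ (mRank_set_bddAbove M X)

lemma le_mRank [M.Finite] (hI : M.Indep I) (hIX : I ⊆ X) : I.ncard ≤ M.mRank X :=
  le_csSup (mRank_set_bddAbove M X) ⟨I, hI, hIX, rfl⟩

lemma mRank_mono [M.Finite] (h : X ⊆ Y) : M.mRank X ≤ M.mRank Y := by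
  obtain ⟨I, hI, hIX, hc⟩ := exists_mRank M X
  rw [← hc]
  exact le_mRank hI (hIX.trans h)

/-- Elements of independent sets are not loops. -/
lemma not_mem_closure_empty (hI : M.Indep I) (hp : p ∈ I) : p ∉ M.closure ∅ := by
  have h1 : M.Indep (insert p ∅) := by
    simpa using hI.subset (singleton_subset_iff.2 hp)
  have := (M.empty_indep.insert_indep_iff_of_notMem (notMem_empty p)).mp h1
  exact this.2

lemma indep_singleton_of (hpE : p ∈ M.E) (hpl : p ∉ M.closure ∅) : M.Indep {p} := by
  have := (M.empty_indep.insert_indep_iff_of_notMem (notMem_empty p)).mpr ⟨hpE, hpl⟩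
  simpa using this

/-- If `p` is a nonloop of the flat `F` and `d ∉ F`, then `p ∉ cl {d}`. -/
lemma not_mem_closure_singleton (hF : M.IsFlat F) (hpF : p ∈ F) (hpl : p ∉ M.closure ∅)
    (hdF : e ∉ F) : p ∉ M.closure {e} := by
  intro hmem
  have h1 : p ∈ M.closure (insert e ∅) \ M.closure ∅ := by
    simpa using ⟨hmem, hpl⟩
  have h2 := Matroid.closure_exchange h1
  have h3 : M.closure (insert p ∅) ⊆ F := by
    have : M.closure ({p} : Set α) ⊆ M.closure F :=
      M.closure_subset_closure (singleton_subset_iff.2 hpF)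
    rw [hF.closure] at this
    simpa using this
  exact hdF (h3 h2.1)

/-- The key exchange step: if `d ∈ F`, `p ∈ F`, `p ∈ cl {e, d} \ cl {d}` for a flat `F`,
then `e ∈ F`. -/
lemma mem_flat_of_exchange (hF : M.IsFlat F) (hd : e ∈ F) (hp : p ∈ F)
    (hpcl : p ∈ M.closure (insert p' {e})) (hpd : p ∉ M.closure {e}) : p' ∈ F := by
  have h1 : p' ∈ M.closure (insert p {e}) := (Matroid.closure_exchange ⟨hpcl, hpd⟩).1
  have h2 : M.closure (insert p {e}) ⊆ F := by
    have : M.closure (insert p {e}) ⊆ M.closure F :=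
      M.closure_subset_closure (insert_subset hp (singleton_subset_iff.2 hd))
    rwa [hF.closure] at this
  exact h2 h1

end MCAux

open MCAux

/-- Let `M` be a saturated matroid, `H` a modular hyperplane, and `C* = E(M) − H` the
complementary cocircuit. If `C*` is non-spanning, then `(H, cl C*)` is a modular cover. -/
theorem modularCover_hyperplane_closure_cocircuit {α : Type*} (M : Matroid α) [M.Finite]
    (hsat : M.Saturated) (H : Set α) (hH : M.IsHyperplane H) (hmod : M.IsModularFlat H)
    (hns : ¬ M.Spanning (M.E \ H)) :
    M.ModularCover H (M.closure (M.E \ H)) := by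
  set D : Set α := M.E \ H with hD
  set X : Set α := M.closure D with hX
  have hHE : H ⊆ M.E := hH.1.subset_ground
  have hDE : D ⊆ M.E := diff_subset
  have hXE : X ⊆ M.E := M.closure_subset_ground D
  have hXflat : M.IsFlat X := flat_closure M D
  have hDX : D ⊆ X := M.subset_closure D hDE
  have hXne : X ≠ M.E := fun h => hns ⟨h, hDE⟩
  have hHne : H ≠ M.E := by
    intro h
    have h2 := hH.2
    rw [h] at h2
    simp only [Matroid.mRk] at h2
    omega
  have hUnion : H ∪ X = M.E := by
    apply subset_antisymm (union_subset hHE hXE)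
    intro x hx
    by_cases hxH : x ∈ H
    · exact Or.inl hxH
    · exact Or.inr (hDX ⟨hx, hxH⟩)
  have hloops : M.closure ∅ ⊆ H := by
    have := M.closure_subset_closure (empty_subset H)
    rwa [hH.1.closure] at this
  -- the closure of the cocircuit is round
  have hround : M.RoundSet X := by
    refine ⟨hXE, ?_⟩
    rintro F₁ F₂ ⟨⟨hF₁flat, hF₁ne⟩, ⟨hF₂flat, hF₂ne⟩, huni⟩
    have hGE : (M ↾ X).E = X := rfl
    rw [hGE] at hF₁ne hF₂ne huni
    have hF₁ : M.IsFlat F₁ := flat_of_flat_restrict hXflat hF₁flat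
    have hF₂ : M.IsFlat F₂ := flat_of_flat_restrict hXflat hF₂flat
    have hF₁X : F₁ ⊆ X := hF₁flat.subset_ground
    have hF₂X : F₂ ⊆ X := hF₂flat.subset_ground
    -- find points of the cocircuit outside each flat
    have hD1 : ¬ D ⊆ F₁ := by
      intro h
      exact hF₁ne (subset_antisymm hF₁X ((M.closure_subset_closure h).trans_eq hF₁.closure))
    have hD2 : ¬ D ⊆ F₂ := by
      intro h
      exact hF₂ne (subset_antisymm hF₂X ((M.closure_subset_closure h).trans_eq hF₂.closure))
    obtain ⟨d₂, hd₂D, hd₂F₁⟩ := not_subset.mp hD1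
    obtain ⟨d₁, hd₁D, hd₁F₂⟩ := not_subset.mp hD2
    have hd₁F₁ : d₁ ∈ F₁ := by
      have : d₁ ∈ F₁ ∪ F₂ := huni ▸ hDX hd₁D
      exact this.elim id fun h => absurd h hd₁F₂
    have hd₂F₂ : d₂ ∈ F₂ := by
      have : d₂ ∈ F₁ ∪ F₂ := huni ▸ hDX hd₂D
      exact this.elim (fun h => absurd h hd₂F₁) id
    have hd₁E : d₁ ∈ M.E := hDE hd₁D
    have hd₂E : d₂ ∈ M.E := hDE hd₂D
    have hd₁l : d₁ ∉ M.closure ∅ := fun h => hd₁D.2 (hloops h)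
    have hd₂l : d₂ ∉ M.closure ∅ := fun h => hd₂D.2 (hloops h)
    have hne : d₂ ≠ d₁ := fun h => hd₂F₁ (h ▸ hd₁F₁)
    -- the pair {d₂, d₁} is independent
    have hd₂cl : d₂ ∉ M.closure {d₁} := by
      intro h
      have h3 : M.closure ({d₁} : Set α) ⊆ F₁ := by
        have := M.closure_subset_closure (singleton_subset_iff.2 hd₁F₁)
        rwa [hF₁.closure] at this
      exact hd₂F₁ (h3 h)
    have hd₁sing : M.Indep {d₁} := indep_singleton_of hd₁E hd₁l
    have hpair : M.Indep ({d₂, d₁} : Set α) :=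
      (hd₁sing.insert_indep_iff_of_notMem (by simpa using hne)).mpr ⟨hd₂E, hd₂cl⟩
    set L : Set α := M.closure {d₂, d₁} with hL
    have hpairE : ({d₂, d₁} : Set α) ⊆ M.E := hpair.subset_ground
    have hLflat : M.IsFlat L := flat_closure M _
    have hLX : L ⊆ X := by
      have h1 : ({d₂, d₁} : Set α) ⊆ X := insert_subset (hDX hd₂D)
        (singleton_subset_iff.2 (hDX hd₁D))
      have := M.closure_subset_closure h1
      rwa [hX, Matroid.closure_closure] at this
    -- rank computation: H ∩ L contains a nonloop
    have hL2 : 2 ≤ M.mRank L := by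
      have := le_mRank (M := M) hpair (M.subset_closure _ hpairE)
      rwa [Set.ncard_pair hne] at this
    have hHL : M.mRank (H ∪ L) ≤ M.mRk :=
      mRank_mono (union_subset hHE (hLflat.subset_ground))
    have hmodL := hmod.2 L hLflat
    have hH2 := hH.2
    have hHLpos : 1 ≤ M.mRank (H ∩ L) := by omega
    obtain ⟨I, hI, hIHL, hc⟩ := exists_mRank M (H ∩ L)
    have hInon : I.Nonempty := Set.nonempty_of_ncard_ne_zero (by omega)
    obtain ⟨p, hpI⟩ := hInon
    have hpH : p ∈ H := (hIHL hpI).1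
    have hpL : p ∈ L := (hIHL hpI).2
    have hpl : p ∉ M.closure ∅ := not_mem_closure_empty hI hpI
    -- p is in F₁ or F₂; either way we get a contradiction by exchange
    have hpX : p ∈ F₁ ∪ F₂ := huni ▸ hLX hpL
    rcases hpX with hpF₁ | hpF₂
    · -- then d₂ ∈ F₁, contradiction
      have hpd₁ : p ∉ M.closure {d₁} :=
        not_mem_closure_singleton hH.1 hpH hpl hd₁D.2
      exact hd₂F₁ (mem_flat_of_exchange hF₁ hd₁F₁ hpF₁ hpL hpd₁)
    · -- then d₁ ∈ F₂, contradiction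
      have hpd₂ : p ∉ M.closure {d₂} :=
        not_mem_closure_singleton hH.1 hpH hpl hd₂D.2
      have hpL' : p ∈ M.closure (insert d₁ {d₂}) := by
        rwa [show (insert d₁ {d₂} : Set α) = {d₂, d₁} from Set.pair_comm d₁ d₂]
      exact hd₁F₂ (mem_flat_of_exchange hF₂ hd₂F₂ hpF₂ hpL' hpd₂)
  exact ⟨⟨⟨hH.1, hHne⟩, ⟨hXflat, hXne⟩, hUnion⟩, hmod, hsat X hXflat hround⟩
end

section
/- Let M be a matroid. Then M is supersolvable if and only if each of its connected components is supersolvable; and M is saturated if and only if each of its connected components is saturated. In particular, for a direct sum M = M_1 ⊕ M_2, M is supersolvable (respectively saturated) if and only if both M_1 and M_2 are supersolvable (respectively saturated). -/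
open Set

namespace Matroid

variable {γ : Type*} {M : Matroid γ} {X Y I F F' : Set γ} {e f : γ}

lemma mRankSet_nonempty (M : Matroid γ) (X : Set γ) :
    {n : ℕ | ∃ I, M.Indep I ∧ I ⊆ X ∧ I.ncard = n}.Nonempty :=
  ⟨0, ∅, M.empty_indep, empty_subset _, by simp⟩

lemma mRankSet_bddAbove (M : Matroid γ) [M.Finite] (X : Set γ) :
    BddAbove {n : ℕ | ∃ I, M.Indep I ∧ I ⊆ X ∧ I.ncard = n} := by
  refine ⟨M.E.ncard, fun n hn => ?_⟩
  obtain ⟨I, hI, -, rfl⟩ := hn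
  exact ncard_le_ncard hI.subset_ground M.ground_finite

lemma ncard_le_mRank [M.Finite] (hI : M.Indep I) (hIX : I ⊆ X) :
    I.ncard ≤ M.mRank X :=
  le_csSup (M.mRankSet_bddAbove X) ⟨I, hI, hIX, rfl⟩

lemma mRank_le [M.Finite] {n : ℕ} (h : ∀ I, M.Indep I → I ⊆ X → I.ncard ≤ n) :
    M.mRank X ≤ n := by
  refine csSup_le (M.mRankSet_nonempty X) ?_
  rintro m ⟨I, hI, hIX, rfl⟩
  exact h I hI hIX

lemma exists_mRank_witness (M : Matroid γ) [M.Finite] (X : Set γ) :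
    ∃ I, M.Indep I ∧ I ⊆ X ∧ I.ncard = M.mRank X :=
  Nat.sSup_mem (M.mRankSet_nonempty X) (M.mRankSet_bddAbove X)

lemma mRank_mono [M.Finite] (h : X ⊆ Y) : M.mRank X ≤ M.mRank Y := by
  refine mRank_le fun I hI hIX => ncard_le_mRank hI (hIX.trans h)

@[simp] lemma mRank_empty (M : Matroid γ) : M.mRank ∅ = 0 := by
  have : {n : ℕ | ∃ I, M.Indep I ∧ I ⊆ (∅ : Set γ) ∧ I.ncard = n} = {0} := by
    ext n
    constructor
    · rintro ⟨I, hI, hIX, rfl⟩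
      simp [subset_empty_iff.1 hIX]
    · rintro rfl
      exact ⟨∅, M.empty_indep, Subset.rfl, by simp⟩
  rw [mRank, this, csSup_singleton]

lemma mRank_restrict (M : Matroid γ) (X Y : Set γ) :
    (M ↾ X).mRank Y = M.mRank (Y ∩ X) := by
  unfold mRank
  congr 1
  ext n
  constructor
  · rintro ⟨I, hI, hIY, rfl⟩
    rw [restrict_indep_iff] at hI
    exact ⟨I, hI.1, subset_inter hIY hI.2, rfl⟩
  · rintro ⟨I, hI, hIY, rfl⟩
    exact ⟨I, restrict_indep_iff.2 ⟨hI, (subset_inter_iff.1 hIY).2⟩,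
      (subset_inter_iff.1 hIY).1, rfl⟩

lemma mRk_restrict (M : Matroid γ) (X : Set γ) : (M ↾ X).mRk = M.mRank X := by
  rw [mRk, mRank_restrict, restrict_ground_eq, inter_self]

lemma restrict_finite' [M.Finite] (hX : X ⊆ M.E) : (M ↾ X).Finite :=
  ⟨M.set_finite X hX⟩


lemma flat_closure' (M : Matroid γ) (X : Set γ) : M.IsFlat (M.closure X) :=
  ⟨fun _ Y hI hIY => hIY.subset_closure.trans
      (by rw [hI.closure_eq_closure, closure_closure]),
    M.closure_subset_ground X⟩

lemma flat_iff_closure_self : M.IsFlat F ↔ M.closure F = F ∧ F ⊆ M.E :=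
  ⟨fun h => ⟨h.closure, h.subset_ground⟩, fun ⟨h1, _⟩ => h1 ▸ M.flat_closure' F⟩

lemma IsFlat.loops_subset' (hF : M.IsFlat F) : M.closure ∅ ⊆ F :=
  (M.closure_subset_closure (empty_subset F)).trans hF.closure.subset

lemma mem_loops_iff : e ∈ M.closure ∅ ↔ e ∈ M.E ∧ ¬ M.Indep {e} := by
  rw [M.empty_indep.mem_closure_iff']
  simp

lemma Indep.disjoint_loops' (hI : M.Indep I) : I ∩ M.closure ∅ = ∅ := by
  by_contra h
  obtain ⟨e, heI, heL⟩ := nonempty_iff_ne_empty.2 h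
  exact (mem_loops_iff.1 heL).2 (hI.subset (singleton_subset_iff.2 heI))

lemma mRank_union_loops [M.Finite] (hL : L ⊆ M.closure ∅) :
    M.mRank (X ∪ L) = M.mRank X := by
  refine le_antisymm (mRank_le fun I hI hIX => ncard_le_mRank hI fun e he => ?_)
    (mRank_mono subset_union_left)
  rcases hIX he with h | h
  · exact h
  · exact absurd (mem_inter he (hL h)) (by rw [hI.disjoint_loops']; exact notMem_empty e)

lemma mRank_eq_zero_of_subset_loops [M.Finite] (hX : X ⊆ M.closure ∅) :
    M.mRank X = 0 := by
  have := M.mRank_union_loops (X := ∅) hX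
  rwa [empty_union, mRank_empty] at this

lemma flat_eq_loops_of_mRank_zero [M.Finite] (hF : M.IsFlat F) (h0 : M.mRank F = 0) :
    F = M.closure ∅ := by
  refine subset_antisymm (fun e heF => ?_) hF.loops_subset'
  rw [mem_loops_iff]
  refine ⟨hF.subset_ground heF, fun hind => ?_⟩
  have := ncard_le_mRank hind (singleton_subset_iff.2 heF)
  simp [h0] at this

lemma modular_of_mRank_zero [M.Finite] (hF : M.IsFlat F) (h0 : M.mRank F = 0) :
    M.IsModularFlat F := by
  have hFL : F ⊆ M.closure ∅ := (flat_eq_loops_of_mRank_zero hF h0).subset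
  refine ⟨hF, fun F' hF' => ?_⟩
  have hz : M.mRank (F ∩ F') = 0 :=
    Nat.eq_zero_of_le_zero (h0 ▸ mRank_mono inter_subset_left)
  rw [h0, union_comm, mRank_union_loops hFL, zero_add, hz, add_zero]

lemma ground_eq_loops_of_mRk_zero [M.Finite] (h : M.mRk = 0) : M.E = M.closure ∅ :=
  flat_eq_loops_of_mRank_zero M.ground_isFlat h

lemma flat_eq_ground_of_mRk_zero [M.Finite] (h : M.mRk = 0) (hF : M.IsFlat F) :
    F = M.E := by
  refine subset_antisymm hF.subset_ground ?_
  rw [ground_eq_loops_of_mRk_zero h]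
  exact hF.loops_subset'


section Sum
variable {M₁ M₂ : Matroid γ} {hdj : Disjoint M₁.E M₂.E}

lemma disjointSum_finite' [M₁.Finite] [M₂.Finite] : (M₁.disjointSum M₂ hdj).Finite :=
  ⟨by rw [disjointSum_ground_eq]; exact M₁.ground_finite.union M₂.ground_finite⟩

lemma mRank_disjointSum [M₁.Finite] [M₂.Finite] (X : Set γ) :
    (M₁.disjointSum M₂ hdj).mRank X = M₁.mRank (X ∩ M₁.E) + M₂.mRank (X ∩ M₂.E) := by
  haveI := disjointSum_finite' (M₁ := M₁) (M₂ := M₂) (hdj := hdj)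
  refine le_antisymm (mRank_le fun I hI hIX => ?_) ?_
  · rw [disjointSum_indep_iff] at hI
    have hIdec : I = (I ∩ M₁.E) ∪ (I ∩ M₂.E) := by
      rw [← inter_union_distrib_left, inter_eq_self_of_subset_left hI.2.2]
    have hfin1 : (I ∩ M₁.E).Finite := M₁.set_finite _ inter_subset_right
    have hfin2 : (I ∩ M₂.E).Finite := M₂.set_finite _ inter_subset_right
    have hd : Disjoint (I ∩ M₁.E) (I ∩ M₂.E) :=
      hdj.mono inter_subset_right inter_subset_right
    calc I.ncard = (I ∩ M₁.E).ncard + (I ∩ M₂.E).ncard := by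
          rw [← ncard_union_eq hd hfin1 hfin2, ← hIdec]
      _ ≤ _ := Nat.add_le_add
          (ncard_le_mRank hI.1 (inter_subset_inter_left _ hIX))
          (ncard_le_mRank hI.2.1 (inter_subset_inter_left _ hIX))
  · obtain ⟨I₁, hI₁, hI₁X, hc1⟩ := M₁.exists_mRank_witness (X ∩ M₁.E)
    obtain ⟨I₂, hI₂, hI₂X, hc2⟩ := M₂.exists_mRank_witness (X ∩ M₂.E)
    have hI₁E : I₁ ⊆ M₁.E := hI₁.subset_ground
    have hI₂E : I₂ ⊆ M₂.E := hI₂.subset_ground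
    have h1 : (I₁ ∪ I₂) ∩ M₁.E = I₁ := by
      rw [union_inter_distrib_right, inter_eq_self_of_subset_left hI₁E,
        (hdj.symm.mono_left hI₂E).inter_eq, union_empty]
    have h2 : (I₁ ∪ I₂) ∩ M₂.E = I₂ := by
      rw [union_inter_distrib_right, (hdj.mono_left hI₁E).inter_eq,
        inter_eq_self_of_subset_left hI₂E, empty_union]
    have hind : (M₁.disjointSum M₂ hdj).Indep (I₁ ∪ I₂) := by
      rw [disjointSum_indep_iff, h1, h2]
      exact ⟨hI₁, hI₂, union_subset_union hI₁E hI₂E⟩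
    have hsub : I₁ ∪ I₂ ⊆ X :=
      union_subset (hI₁X.trans inter_subset_left) (hI₂X.trans inter_subset_left)
    have := ncard_le_mRank hind hsub
    rwa [ncard_union_eq (hdj.mono hI₁E hI₂E) (M₁.set_finite _ hI₁E)
      (M₂.set_finite _ hI₂E), hc1, hc2] at this

lemma mRk_disjointSum [M₁.Finite] [M₂.Finite] :
    (M₁.disjointSum M₂ hdj).mRk = M₁.mRk + M₂.mRk := by
  rw [mRk, mRank_disjointSum, disjointSum_ground_eq,
    union_inter_distrib_right, inter_self, (hdj.symm).inter_eq, union_empty,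
    union_inter_distrib_right, inter_self, hdj.inter_eq, empty_union]
  rfl

lemma disjointSum_closure_eq (M₁ M₂ : Matroid γ) (hdj : Disjoint M₁.E M₂.E) (X : Set γ)
    (hX : X ⊆ M₁.E ∪ M₂.E) :
    (M₁.disjointSum M₂ hdj).closure X = M₁.closure (X ∩ M₁.E) ∪ M₂.closure (X ∩ M₂.E) := by
  obtain ⟨I₁, hI₁⟩ := M₁.exists_isBasis (X ∩ M₁.E) inter_subset_right
  obtain ⟨I₂, hI₂⟩ := M₂.exists_isBasis (X ∩ M₂.E) inter_subset_right
  have hI₁E : I₁ ⊆ M₁.E := hI₁.indep.subset_ground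
  have hI₂E : I₂ ⊆ M₂.E := hI₂.indep.subset_ground
  have h1 : (I₁ ∪ I₂) ∩ M₁.E = I₁ := by
    rw [union_inter_distrib_right, inter_eq_self_of_subset_left hI₁E,
      (hdj.symm.mono_left hI₂E).inter_eq, union_empty]
  have h2 : (I₁ ∪ I₂) ∩ M₂.E = I₂ := by
    rw [union_inter_distrib_right, (hdj.mono_left hI₁E).inter_eq,
      inter_eq_self_of_subset_left hI₂E, empty_union]
  have hbasis : (M₁.disjointSum M₂ hdj).IsBasis (I₁ ∪ I₂) X := by
    rw [disjointSum_isBasis_iff, h1, h2]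
    exact ⟨hI₁, hI₂, union_subset (hI₁.subset.trans inter_subset_left)
      (hI₂.subset.trans inter_subset_left), hX⟩
  have hind : (M₁.disjointSum M₂ hdj).Indep (I₁ ∪ I₂) := hbasis.indep
  rw [← hbasis.closure_eq_closure, ← hI₁.closure_eq_closure, ← hI₂.closure_eq_closure]
  ext e
  rw [hind.mem_closure_iff']
  constructor
  · rintro ⟨heE, hdep⟩
    rw [disjointSum_ground_eq] at heE
    rcases heE with he1 | he2
    · left
      rw [hI₁.indep.mem_closure_iff']
      refine ⟨he1, fun hins => ?_⟩
      have : (M₁.disjointSum M₂ hdj).Indep (insert e (I₁ ∪ I₂)) := by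
        rw [disjointSum_indep_iff]
        have e1 : insert e (I₁ ∪ I₂) ∩ M₁.E = insert e I₁ := by
          rw [insert_inter_of_mem he1, h1]
        have e2 : insert e (I₁ ∪ I₂) ∩ M₂.E = I₂ := by
          rw [insert_inter_of_notMem (disjoint_left.1 hdj he1), h2]
        rw [e1, e2]
        exact ⟨hins, hI₂.indep, insert_subset (Or.inl he1)
          (union_subset (hI₁E.trans subset_union_left) (hI₂E.trans subset_union_right))⟩
      rcases hdep this with h | h
      · exact h
      · exact absurd (hI₂E h) (disjoint_left.1 hdj he1)
    · right
      rw [hI₂.indep.mem_closure_iff']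
      refine ⟨he2, fun hins => ?_⟩
      have : (M₁.disjointSum M₂ hdj).Indep (insert e (I₁ ∪ I₂)) := by
        rw [disjointSum_indep_iff]
        have e1 : insert e (I₁ ∪ I₂) ∩ M₁.E = I₁ := by
          rw [insert_inter_of_notMem (disjoint_right.1 hdj he2), h1]
        have e2 : insert e (I₁ ∪ I₂) ∩ M₂.E = insert e I₂ := by
          rw [insert_inter_of_mem he2, h2]
        rw [e1, e2]
        exact ⟨hI₁.indep, hins, insert_subset (Or.inr he2)
          (union_subset (hI₁E.trans subset_union_left) (hI₂E.trans subset_union_right))⟩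
      rcases hdep this with h | h
      · exact absurd (hI₁E h) (disjoint_right.1 hdj he2)
      · exact h
  · intro h
    rcases h with h | h
    · rw [hI₁.indep.mem_closure_iff'] at h
      refine ⟨by rw [disjointSum_ground_eq]; exact Or.inl h.1, fun hins => ?_⟩
      rw [disjointSum_indep_iff] at hins
      have e1 : insert e (I₁ ∪ I₂) ∩ M₁.E = insert e I₁ := by
        rw [insert_inter_of_mem h.1, h1]
      rw [e1] at hins
      exact Or.inl (h.2 hins.1)
    · rw [hI₂.indep.mem_closure_iff'] at h
      refine ⟨by rw [disjointSum_ground_eq]; exact Or.inr h.1, fun hins => ?_⟩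
      rw [disjointSum_indep_iff] at hins
      have e2 : insert e (I₁ ∪ I₂) ∩ M₂.E = insert e I₂ := by
        rw [insert_inter_of_mem h.1, h2]
      rw [e2] at hins
      exact Or.inr (h.2 hins.2.1)

lemma disjointSum_flat_iff {F : Set γ} :
    (M₁.disjointSum M₂ hdj).IsFlat F ↔
      M₁.IsFlat (F ∩ M₁.E) ∧ M₂.IsFlat (F ∩ M₂.E) ∧ F ⊆ M₁.E ∪ M₂.E := by
  constructor
  · intro hF
    have hFE : F ⊆ M₁.E ∪ M₂.E := by
      have := hF.subset_ground
      rwa [disjointSum_ground_eq] at this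
    have hcl := hF.closure
    rw [disjointSum_closure_eq M₁ M₂ hdj F hFE] at hcl
    have h1 : M₁.closure (F ∩ M₁.E) = F ∩ M₁.E := by
      have : M₁.closure (F ∩ M₁.E) = (M₁.closure (F ∩ M₁.E) ∪ M₂.closure (F ∩ M₂.E)) ∩ M₁.E := by
        rw [union_inter_distrib_right,
          inter_eq_self_of_subset_left (M₁.closure_subset_ground _),
          (hdj.symm.mono_left (M₂.closure_subset_ground _)).inter_eq, union_empty]
      rw [this, hcl]
    have h2 : M₂.closure (F ∩ M₂.E) = F ∩ M₂.E := by
      have : M₂.closure (F ∩ M₂.E) = (M₁.closure (F ∩ M₁.E) ∪ M₂.closure (F ∩ M₂.E)) ∩ M₂.E := by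
        rw [union_inter_distrib_right,
          (hdj.mono_left (M₁.closure_subset_ground _)).inter_eq,
          inter_eq_self_of_subset_left (M₂.closure_subset_ground _), empty_union]
      rw [this, hcl]
    exact ⟨flat_iff_closure_self.2 ⟨h1, inter_subset_right⟩,
      flat_iff_closure_self.2 ⟨h2, inter_subset_right⟩, hFE⟩
  · rintro ⟨h1, h2, hFE⟩
    rw [flat_iff_closure_self]
    refine ⟨?_, by rw [disjointSum_ground_eq]; exact hFE⟩
    rw [disjointSum_closure_eq M₁ M₂ hdj F hFE, h1.closure, h2.closure,
      ← inter_union_distrib_left, inter_eq_self_of_subset_left hFE]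

lemma disjointSum_restrict_eq {F : Set γ} (hF : F ⊆ M₁.E ∪ M₂.E) :
    (M₁.disjointSum M₂ hdj) ↾ F =
      (M₁ ↾ (F ∩ M₁.E)).disjointSum (M₂ ↾ (F ∩ M₂.E))
        (hdj.mono inter_subset_right inter_subset_right) := by
  rw [ext_iff_indep]
  constructor
  · rw [restrict_ground_eq, disjointSum_ground_eq, restrict_ground_eq, restrict_ground_eq,
      ← inter_union_distrib_left, inter_eq_self_of_subset_left hF]
  · intro I hIF
    rw [restrict_ground_eq] at hIF
    have hIa : I ∩ (F ∩ M₁.E) = I ∩ M₁.E := by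
      rw [← inter_assoc, inter_eq_self_of_subset_left hIF]
    have hIb : I ∩ (F ∩ M₂.E) = I ∩ M₂.E := by
      rw [← inter_assoc, inter_eq_self_of_subset_left hIF]
    have hIc : (F ∩ M₁.E) ∪ (F ∩ M₂.E) = F := by
      rw [← inter_union_distrib_left, inter_eq_self_of_subset_left hF]
    rw [restrict_indep_iff, disjointSum_indep_iff, disjointSum_indep_iff,
      restrict_indep_iff, restrict_indep_iff, restrict_ground_eq, restrict_ground_eq,
      hIa, hIb, hIc]
    constructor
    · rintro ⟨⟨h1, h2, _⟩, h4⟩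
      exact ⟨⟨h1, inter_subset_inter_left _ h4⟩, ⟨h2, inter_subset_inter_left _ h4⟩, h4⟩
    · rintro ⟨⟨h1, _⟩, ⟨h2, _⟩, h3⟩
      exact ⟨⟨h1, h2, h3.trans hF⟩, h3⟩


lemma disjointSum_isModularFlat_iff [M₁.Finite] [M₂.Finite] {F : Set γ}
    (hF : (M₁.disjointSum M₂ hdj).IsFlat F) :
    (M₁.disjointSum M₂ hdj).IsModularFlat F ↔
      M₁.IsModularFlat (F ∩ M₁.E) ∧ M₂.IsModularFlat (F ∩ M₂.E) := by
  obtain ⟨hF1, hF2, hFE⟩ := disjointSum_flat_iff.1 hF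
  have hd : ∀ a, a ∈ M₁.E → a ∈ M₂.E → False := fun a h1 h2 => disjoint_left.1 hdj h1 h2
  constructor
  · rintro ⟨-, hmod⟩
    constructor
    · refine ⟨hF1, fun F' hF' => ?_⟩
      have hF'E : ∀ a ∈ F', a ∈ M₁.E := hF'.subset_ground
      set G := F' ∪ (F ∩ M₂.E) with hG
      have e1 : G ∩ M₁.E = F' := by
        ext a; simp only [hG, mem_inter_iff, mem_union]
        constructor
        · rintro ⟨h | ⟨-, h2⟩, hm⟩
          · exact h
          · exact absurd hm (fun hm => hd a hm h2)
        · exact fun h => ⟨Or.inl h, hF'E a h⟩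
      have e2 : G ∩ M₂.E = F ∩ M₂.E := by
        ext a; simp only [hG, mem_inter_iff, mem_union]
        constructor
        · rintro ⟨h | h, hm⟩
          · exact absurd hm (fun hm => hd a (hF'E a h) hm)
          · exact h
        · exact fun h => ⟨Or.inr h, h.2⟩
      have hGflat : (M₁.disjointSum M₂ hdj).IsFlat G := by
        rw [disjointSum_flat_iff, e1, e2]
        exact ⟨hF', hF2, union_subset (fun a ha => Or.inl (hF'E a ha))
          (inter_subset_right.trans subset_union_right)⟩
      have key := hmod G hGflat
      rw [mRank_disjointSum, mRank_disjointSum, mRank_disjointSum, mRank_disjointSum,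
        e1, e2] at key
      have e3 : (F ∪ G) ∩ M₁.E = (F ∩ M₁.E) ∪ F' := by
        ext a; simp only [hG, mem_inter_iff, mem_union]; tauto
      have e4 : (F ∪ G) ∩ M₂.E = F ∩ M₂.E := by
        ext a; simp only [hG, mem_inter_iff, mem_union]
        constructor
        · rintro ⟨h | (h | h), hm⟩
          · exact ⟨h, hm⟩
          · exact absurd hm (fun hm => hd a (hF'E a h) hm)
          · exact h
        · exact fun h => ⟨Or.inl h.1, h.2⟩
      have e5 : (F ∩ G) ∩ M₁.E = (F ∩ M₁.E) ∩ F' := by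
        ext a; simp only [hG, mem_inter_iff, mem_union]
        constructor
        · rintro ⟨⟨haF, h | ⟨-, h2⟩⟩, hm⟩
          · exact ⟨⟨haF, hm⟩, h⟩
          · exact absurd hm (fun hm => hd a hm h2)
        · rintro ⟨⟨haF, hm⟩, h⟩
          exact ⟨⟨haF, Or.inl h⟩, hm⟩
      have e6 : (F ∩ G) ∩ M₂.E = F ∩ M₂.E := by
        ext a; simp only [hG, mem_inter_iff, mem_union]
        constructor
        · rintro ⟨⟨haF, -⟩, hm⟩
          exact ⟨haF, hm⟩
        · rintro ⟨haF, hm⟩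
          exact ⟨⟨haF, Or.inr ⟨haF, hm⟩⟩, hm⟩
      rw [e3, e4, e5, e6] at key
      omega
    · refine ⟨hF2, fun F' hF' => ?_⟩
      have hF'E : ∀ a ∈ F', a ∈ M₂.E := hF'.subset_ground
      set G := (F ∩ M₁.E) ∪ F' with hG
      have e1 : G ∩ M₂.E = F' := by
        ext a; simp only [hG, mem_inter_iff, mem_union]
        constructor
        · rintro ⟨⟨-, h2⟩ | h, hm⟩
          · exact absurd hm (fun hm => hd a h2 hm)
          · exact h
        · exact fun h => ⟨Or.inr h, hF'E a h⟩
      have e2 : G ∩ M₁.E = F ∩ M₁.E := by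
        ext a; simp only [hG, mem_inter_iff, mem_union]
        constructor
        · rintro ⟨h | h, hm⟩
          · exact h
          · exact absurd hm (fun hm => hd a hm (hF'E a h))
        · exact fun h => ⟨Or.inl h, h.2⟩
      have hGflat : (M₁.disjointSum M₂ hdj).IsFlat G := by
        rw [disjointSum_flat_iff, e1, e2]
        exact ⟨hF1, hF', union_subset (inter_subset_right.trans subset_union_left)
          (fun a ha => Or.inr (hF'E a ha))⟩
      have key := hmod G hGflat
      rw [mRank_disjointSum, mRank_disjointSum, mRank_disjointSum, mRank_disjointSum,
        e1, e2] at key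
      have e3 : (F ∪ G) ∩ M₂.E = (F ∩ M₂.E) ∪ F' := by
        ext a; simp only [hG, mem_inter_iff, mem_union]; tauto
      have e4 : (F ∪ G) ∩ M₁.E = F ∩ M₁.E := by
        ext a; simp only [hG, mem_inter_iff, mem_union]
        constructor
        · rintro ⟨h | (h | h), hm⟩
          · exact ⟨h, hm⟩
          · exact h
          · exact absurd hm (fun hm => hd a hm (hF'E a h))
        · exact fun h => ⟨Or.inl h.1, h.2⟩
      have e5 : (F ∩ G) ∩ M₂.E = (F ∩ M₂.E) ∩ F' := by
        ext a; simp only [hG, mem_inter_iff, mem_union]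
        constructor
        · rintro ⟨⟨haF, ⟨-, h2⟩ | h⟩, hm⟩
          · exact absurd hm (fun hm => hd a h2 hm)
          · exact ⟨⟨haF, hm⟩, h⟩
        · rintro ⟨⟨haF, hm⟩, h⟩
          exact ⟨⟨haF, Or.inr h⟩, hm⟩
      have e6 : (F ∩ G) ∩ M₁.E = F ∩ M₁.E := by
        ext a; simp only [hG, mem_inter_iff, mem_union]
        constructor
        · rintro ⟨⟨haF, -⟩, hm⟩
          exact ⟨haF, hm⟩
        · rintro ⟨haF, hm⟩
          exact ⟨⟨haF, Or.inl ⟨haF, hm⟩⟩, hm⟩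
      rw [e3, e4, e5, e6] at key
      omega
  · rintro ⟨⟨-, hmod1⟩, ⟨-, hmod2⟩⟩
    refine ⟨hF, fun F' hF' => ?_⟩
    obtain ⟨hF'1, hF'2, hF'E⟩ := disjointSum_flat_iff.1 hF'
    have e1 : (F ∪ F') ∩ M₁.E = (F ∩ M₁.E) ∪ (F' ∩ M₁.E) := union_inter_distrib_right ..
    have e2 : (F ∪ F') ∩ M₂.E = (F ∩ M₂.E) ∪ (F' ∩ M₂.E) := union_inter_distrib_right ..
    have e3 : (F ∩ F') ∩ M₁.E = (F ∩ M₁.E) ∩ (F' ∩ M₁.E) := by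
      ext a; simp only [mem_inter_iff]; tauto
    have e4 : (F ∩ F') ∩ M₂.E = (F ∩ M₂.E) ∩ (F' ∩ M₂.E) := by
      ext a; simp only [mem_inter_iff]; tauto
    rw [mRank_disjointSum, mRank_disjointSum, mRank_disjointSum, mRank_disjointSum,
      e1, e2, e3, e4]
    have := hmod1 (F' ∩ M₁.E) hF'1
    have := hmod2 (F' ∩ M₂.E) hF'2
    omega


lemma disjointSum_comm' : M₁.disjointSum M₂ hdj = M₂.disjointSum M₁ hdj.symm := by
  rw [ext_iff_indep]
  constructor
  · rw [disjointSum_ground_eq, disjointSum_ground_eq, union_comm]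
  · intro I _
    rw [disjointSum_indep_iff, disjointSum_indep_iff, union_comm M₂.E]
    tauto

lemma chain_subset_trans {F : ℕ → Set γ} {r : ℕ} (hc : ∀ i < r, F i ⊆ F (i + 1)) :
    ∀ a b, a ≤ b → b ≤ r → F a ⊆ F b := by
  intro a b hab hbr
  induction b with
  | zero => rw [Nat.le_zero.1 hab]
  | succ n ih =>
    rcases Nat.lt_or_ge a (n + 1) with h | h
    · exact (ih (Nat.lt_succ_iff.1 h) (le_of_lt hbr)).trans (hc n hbr)
    · rw [Nat.le_antisymm hab h]

lemma nat_ivt {h : ℕ → ℕ} {r j : ℕ} (hstep : ∀ i < r, h (i + 1) ≤ h i + 1)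
    (hj0 : h 0 ≤ j) (hjr : j ≤ h r) : ∃ i ≤ r, h i = j := by
  induction r with
  | zero => exact ⟨0, le_refl 0, le_antisymm hj0 hjr⟩
  | succ n ih =>
    rcases le_or_gt j (h n) with hle | hlt
    · obtain ⟨i, hi, hhi⟩ := ih (fun i hi => hstep i (hi.trans (Nat.lt_succ_self n))) hle
      exact ⟨i, hi.trans (Nat.le_succ n), hhi⟩
    · have := hstep n (Nat.lt_succ_self n)
      exact ⟨n + 1, le_refl _, by omega⟩

lemma supersolvable_of_disjointSum_left [M₁.Finite] [M₂.Finite]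
    (hSS : (M₁.disjointSum M₂ hdj).Supersolvable) : M₁.Supersolvable := by
  haveI := disjointSum_finite' (M₁ := M₁) (M₂ := M₂) (hdj := hdj)
  obtain ⟨F, hF, hchain⟩ := hSS
  set r := (M₁.disjointSum M₂ hdj).mRk with hr
  have hrsum : r = M₁.mRk + M₂.mRk := mRk_disjointSum
  set h : ℕ → ℕ := fun i => M₁.mRank (F i ∩ M₁.E) with hh
  set g : ℕ → ℕ := fun i => M₂.mRank (F i ∩ M₂.E) with hg
  have hsplit : ∀ i ≤ r, h i + g i = i := by
    intro i hi
    have := (hF i hi).2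
    rwa [mRank_disjointSum] at this
  have hmono : ∀ a b, a ≤ b → b ≤ r → h a ≤ h b := by
    intro a b hab hbr
    exact mRank_mono (inter_subset_inter_left _ (chain_subset_trans hchain a b hab hbr))
  have hmono2 : ∀ a b, a ≤ b → b ≤ r → g a ≤ g b := by
    intro a b hab hbr
    exact mRank_mono (inter_subset_inter_left _ (chain_subset_trans hchain a b hab hbr))
  have h0 : h 0 = 0 := by have := hsplit 0 (Nat.zero_le r); omega
  have hle1 : h r ≤ M₁.mRk := mRank_mono inter_subset_right
  have hle2 : g r ≤ M₂.mRk := mRank_mono inter_subset_right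
  have hr1 : h r = M₁.mRk := by have := hsplit r le_rfl; omega
  have hstep : ∀ i < r, h (i + 1) ≤ h i + 1 := by
    intro i hi
    have h1 := hsplit i (le_of_lt hi)
    have h2 := hsplit (i + 1) hi
    have := hmono i (i + 1) (Nat.le_succ i) hi
    have := hmono2 i (i + 1) (Nat.le_succ i) hi
    omega
  -- define the selection function
  set p : ℕ → ℕ := fun j => sInf {i | i ≤ r ∧ h i = j} with hp
  have hpmem : ∀ j ≤ M₁.mRk, p j ≤ r ∧ h (p j) = j := by
    intro j hj
    have hne : {i | i ≤ r ∧ h i = j}.Nonempty := by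
      obtain ⟨i, hir, hij⟩ := nat_ivt hstep (h0 ▸ Nat.zero_le j) (hr1 ▸ hj)
      exact ⟨i, hir, hij⟩
    exact Nat.sInf_mem hne
  have hpmono : ∀ j, j + 1 ≤ M₁.mRk → p j ≤ p (j + 1) := by
    intro j hj
    by_contra hcon
    push_neg at hcon
    have h1 := hpmem j (by omega)
    have h2 := hpmem (j + 1) hj
    have := hmono (p (j + 1)) (p j) (le_of_lt hcon) h1.1
    omega
  refine ⟨fun j => F (p j) ∩ M₁.E, fun j hj => ?_, fun j hj => ?_⟩
  · obtain ⟨hpr, hpv⟩ := hpmem j hj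
    have hmf := (hF (p j) hpr).1
    have hflat : (M₁.disjointSum M₂ hdj).IsFlat (F (p j)) := hmf.1
    exact ⟨((disjointSum_isModularFlat_iff hflat).1 hmf).1, hpv⟩
  · have h1 := hpmem j (le_of_lt hj)
    have h2 := hpmem (j + 1) hj
    exact inter_subset_inter_left _
      (chain_subset_trans hchain (p j) (p (j + 1)) (hpmono j hj) h2.1)

lemma disjointSum_supersolvable_iff [M₁.Finite] [M₂.Finite] :
    (M₁.disjointSum M₂ hdj).Supersolvable ↔ M₁.Supersolvable ∧ M₂.Supersolvable := by
  haveI := disjointSum_finite' (M₁ := M₁) (M₂ := M₂) (hdj := hdj)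
  constructor
  · intro hSS
    refine ⟨supersolvable_of_disjointSum_left hSS, ?_⟩
    rw [disjointSum_comm'] at hSS
    exact supersolvable_of_disjointSum_left hSS
  · rintro ⟨⟨F₁, hF₁, hc₁⟩, ⟨F₂, hF₂, hc₂⟩⟩
    set r₁ := M₁.mRk with hr₁
    set r₂ := M₂.mRk with hr₂
    have hrsum : (M₁.disjointSum M₂ hdj).mRk = r₁ + r₂ := mRk_disjointSum
    refine ⟨fun i => F₁ (min i r₁) ∪ F₂ (i - r₁), fun i hi => ?_, fun i hi => ?_⟩
    · rw [hrsum] at hi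
      have hm1 : min i r₁ ≤ r₁ := min_le_right _ _
      have hm2 : i - r₁ ≤ r₂ := by omega
      obtain ⟨hmod1, hrk1⟩ := hF₁ (min i r₁) hm1
      obtain ⟨hmod2, hrk2⟩ := hF₂ (i - r₁) hm2
      have hf1 : M₁.IsFlat (F₁ (min i r₁)) := hmod1.1
      have hf2 : M₂.IsFlat (F₂ (i - r₁)) := hmod2.1
      have hsub1 : F₁ (min i r₁) ⊆ M₁.E := hf1.subset_ground
      have hsub2 : F₂ (i - r₁) ⊆ M₂.E := hf2.subset_ground
      have e1 : (F₁ (min i r₁) ∪ F₂ (i - r₁)) ∩ M₁.E = F₁ (min i r₁) := by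
        rw [union_inter_distrib_right, inter_eq_self_of_subset_left hsub1,
          (hdj.symm.mono_left hsub2).inter_eq, union_empty]
      have e2 : (F₁ (min i r₁) ∪ F₂ (i - r₁)) ∩ M₂.E = F₂ (i - r₁) := by
        rw [union_inter_distrib_right, (hdj.mono_left hsub1).inter_eq,
          inter_eq_self_of_subset_left hsub2, empty_union]
      have hflat : (M₁.disjointSum M₂ hdj).IsFlat (F₁ (min i r₁) ∪ F₂ (i - r₁)) := by
        rw [disjointSum_flat_iff, e1, e2]
        exact ⟨hf1, hf2, union_subset (hsub1.trans subset_union_left)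
          (hsub2.trans subset_union_right)⟩
      refine ⟨(disjointSum_isModularFlat_iff hflat).2 (by rw [e1, e2]; exact ⟨hmod1, hmod2⟩), ?_⟩
      rw [mRank_disjointSum, e1, e2, hrk1, hrk2]
      omega
    · rw [hrsum] at hi
      rcases Nat.lt_or_ge i r₁ with hcase | hcase
      · have e1 : min i r₁ = i := min_eq_left (le_of_lt hcase)
        have e2 : min (i + 1) r₁ = i + 1 := min_eq_left hcase
        have e3 : i - r₁ = 0 := by omega
        have e4 : i + 1 - r₁ = 0 := by omega
        simp only []
        rw [e1, e2, e3, e4]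
        exact union_subset_union_left _ (hc₁ i hcase)
      · have e1 : min i r₁ = r₁ := min_eq_right hcase
        have e2 : min (i + 1) r₁ = r₁ := min_eq_right (by omega)
        have e3 : i + 1 - r₁ = (i - r₁) + 1 := by omega
        simp only []
        rw [e1, e2, e3]
        exact union_subset_union_right _ (hc₂ (i - r₁) (by omega))


lemma disjointSum_restrict_eq2 {A B : Set γ} (hA : A ⊆ M₁.E) (hB : B ⊆ M₂.E) :
    (M₁.disjointSum M₂ hdj) ↾ (A ∪ B) =
      (M₁ ↾ A).disjointSum (M₂ ↾ B) (hdj.mono hA hB) := by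
  have hd : ∀ a, a ∈ M₁.E → a ∈ M₂.E → False := fun a h1 h2 => disjoint_left.1 hdj h1 h2
  rw [ext_iff_indep]
  constructor
  · rw [restrict_ground_eq, disjointSum_ground_eq, restrict_ground_eq, restrict_ground_eq]
  · intro I hIF
    rw [restrict_ground_eq] at hIF
    have eA : I ∩ M₁.E = I ∩ A := by
      ext a
      simp only [mem_inter_iff]
      constructor
      · rintro ⟨haI, haE⟩
        rcases hIF haI with h | h
        · exact ⟨haI, h⟩
        · exact absurd haE (fun haE => hd a haE (hB h))
      · rintro ⟨haI, haA⟩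
        exact ⟨haI, hA haA⟩
    have eB : I ∩ M₂.E = I ∩ B := by
      ext a
      simp only [mem_inter_iff]
      constructor
      · rintro ⟨haI, haE⟩
        rcases hIF haI with h | h
        · exact absurd haE (fun haE => hd a (hA h) haE)
        · exact ⟨haI, h⟩
      · rintro ⟨haI, haB⟩
        exact ⟨haI, hB haB⟩
    rw [restrict_indep_iff, disjointSum_indep_iff, disjointSum_indep_iff,
      restrict_indep_iff, restrict_indep_iff, restrict_ground_eq, restrict_ground_eq,
      eA, eB]
    constructor
    · rintro ⟨⟨h1, h2, -⟩, h4⟩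
      exact ⟨⟨h1, inter_subset_right⟩, ⟨h2, inter_subset_right⟩, h4⟩
    · rintro ⟨⟨h1, -⟩, ⟨h2, -⟩, h3⟩
      exact ⟨⟨h1, h2, h3.trans (union_subset_union hA hB)⟩, h3⟩

lemma saturated_of_disjointSum_left [M₁.Finite] [M₂.Finite]
    (hSat : (M₁.disjointSum M₂ hdj).Saturated) : M₁.Saturated := by
  haveI := disjointSum_finite' (M₁ := M₁) (M₂ := M₂) (hdj := hdj)
  intro G hGflat hGround
  have hd : ∀ a, a ∈ M₁.E → a ∈ M₂.E → False := fun a h1 h2 => disjoint_left.1 hdj h1 h2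
  have hGE : G ⊆ M₁.E := hGflat.subset_ground
  set L := M₂.closure ∅ with hL
  have hLE : L ⊆ M₂.E := M₂.closure_subset_ground ∅
  haveI : (M₂ ↾ L).Finite := restrict_finite' hLE
  haveI : (M₁ ↾ G).Finite := restrict_finite' hGE
  have e1 : (G ∪ L) ∩ M₁.E = G := by
    ext a; simp only [mem_inter_iff, mem_union]
    constructor
    · rintro ⟨h | h, hm⟩
      · exact h
      · exact absurd hm (fun hm => hd a hm (hLE h))
    · exact fun h => ⟨Or.inl h, hGE h⟩
  have e2 : (G ∪ L) ∩ M₂.E = L := by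
    ext a; simp only [mem_inter_iff, mem_union]
    constructor
    · rintro ⟨h | h, hm⟩
      · exact absurd hm (fun hm => hd a (hGE h) hm)
      · exact h
    · exact fun h => ⟨Or.inr h, hLE h⟩
  have hFflat : (M₁.disjointSum M₂ hdj).IsFlat (G ∪ L) := by
    rw [disjointSum_flat_iff, e1, e2]
    exact ⟨hGflat, M₂.flat_closure' ∅,
      union_subset (hGE.trans subset_union_left) (hLE.trans subset_union_right)⟩
  have hres : (M₁.disjointSum M₂ hdj) ↾ (G ∪ L) =
      (M₁ ↾ G).disjointSum (M₂ ↾ L) (hdj.mono hGE hLE) := disjointSum_restrict_eq2 hGE hLE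
  have hN2rk : (M₂ ↾ L).mRk = 0 := by
    rw [mRk_restrict]
    exact mRank_eq_zero_of_subset_loops Subset.rfl
  have hround : (M₁.disjointSum M₂ hdj).RoundSet (G ∪ L) := by
    have hgr : G ∪ L ⊆ (M₁.disjointSum M₂ hdj).E := by
      rw [disjointSum_ground_eq]
      exact union_subset (hGE.trans subset_union_left) (hLE.trans subset_union_right)
    refine ⟨hgr, fun H H' hVC => ?_⟩
    rw [hres] at hVC
    obtain ⟨⟨hHflat, hHne⟩, ⟨hH'flat, hH'ne⟩, hHunion⟩ := hVC
    rw [disjointSum_ground_eq, restrict_ground_eq, restrict_ground_eq] at hHunion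
    obtain ⟨hH1, hH2, hHE⟩ := disjointSum_flat_iff.1 hHflat
    obtain ⟨hH'1, hH'2, hH'E⟩ := disjointSum_flat_iff.1 hH'flat
    rw [restrict_ground_eq] at hH1 hH2 hHE hH'1 hH'2 hH'E
    have hHL : H ∩ L = L := flat_eq_ground_of_mRk_zero hN2rk hH2
    have hH'L : H' ∩ L = L := flat_eq_ground_of_mRk_zero hN2rk hH'2
    rw [restrict_ground_eq] at hHE hH'E
    refine hGround.2 (H ∩ G) (H' ∩ G) ⟨⟨hH1, fun hc => hHne ?_⟩, ⟨hH'1, fun hc => hH'ne ?_⟩, ?_⟩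
    · rw [restrict_ground_eq] at hc
      rw [disjointSum_ground_eq, restrict_ground_eq, restrict_ground_eq]
      have hGH : G ⊆ H := by
        intro a ha
        have : a ∈ H ∩ G := by rw [hc]; exact ha
        exact this.1
      have hLH : L ⊆ H := by
        intro a ha
        have : a ∈ H ∩ L := by rw [hHL]; exact ha
        exact this.1
      exact subset_antisymm hHE (union_subset hGH hLH)
    · rw [restrict_ground_eq] at hc
      rw [disjointSum_ground_eq, restrict_ground_eq, restrict_ground_eq]
      have hGH : G ⊆ H' := by
        intro a ha
        have : a ∈ H' ∩ G := by rw [hc]; exact ha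
        exact this.1
      have hLH : L ⊆ H' := by
        intro a ha
        have : a ∈ H' ∩ L := by rw [hH'L]; exact ha
        exact this.1
      exact subset_antisymm hH'E (union_subset hGH hLH)
    · rw [restrict_ground_eq, ← union_inter_distrib_right, hHunion]
      ext a; simp only [mem_inter_iff, mem_union]
      constructor
      · rintro ⟨-, hg⟩; exact hg
      · exact fun h => ⟨Or.inl h, h⟩
  have hmod := hSat (G ∪ L) hFflat hround
  have h1 := ((disjointSum_isModularFlat_iff hFflat).1 hmod).1
  rwa [e1] at h1

lemma disjointSum_saturated_iff [M₁.Finite] [M₂.Finite] :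
    (M₁.disjointSum M₂ hdj).Saturated ↔ M₁.Saturated ∧ M₂.Saturated := by
  haveI := disjointSum_finite' (M₁ := M₁) (M₂ := M₂) (hdj := hdj)
  have hd : ∀ a, a ∈ M₁.E → a ∈ M₂.E → False := fun a h1 h2 => disjoint_left.1 hdj h1 h2
  constructor
  · intro hSat
    refine ⟨saturated_of_disjointSum_left hSat, ?_⟩
    rw [disjointSum_comm'] at hSat
    exact saturated_of_disjointSum_left hSat
  · rintro ⟨hSat₁, hSat₂⟩
    intro F hFflat hFround
    obtain ⟨hF1, hF2, hFE⟩ := disjointSum_flat_iff.1 hFflat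
    set A := F ∩ M₁.E with hA
    set B := F ∩ M₂.E with hB
    have hAE : A ⊆ M₁.E := inter_subset_right
    have hBE : B ⊆ M₂.E := inter_subset_right
    haveI : (M₁ ↾ A).Finite := restrict_finite' hAE
    haveI : (M₂ ↾ B).Finite := restrict_finite' hBE
    have hFAB : F = A ∪ B := by
      rw [hA, hB, ← inter_union_distrib_left, inter_eq_self_of_subset_left hFE]
    have hres : (M₁.disjointSum M₂ hdj) ↾ F =
        (M₁ ↾ A).disjointSum (M₂ ↾ B) (hdj.mono hAE hBE) := by
      rw [hFAB]
      exact disjointSum_restrict_eq2 hAE hBE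
    have hABd : ∀ a, a ∈ A → a ∈ B → False :=
      fun a h1 h2 => hd a (hAE h1) (hBE h2)
    -- one of the two sides has rank zero
    have hz : M₁.mRank A = 0 ∨ M₂.mRank B = 0 := by
      by_contra hcon
      push_neg at hcon
      obtain ⟨hA0, hB0⟩ := hcon
      set L₁ := (M₁ ↾ A).closure ∅ with hL₁
      set L₂ := (M₂ ↾ B).closure ∅ with hL₂
      have hL₁A : L₁ ⊆ A := (M₁ ↾ A).closure_subset_ground ∅
      have hL₂B : L₂ ⊆ B := (M₂ ↾ B).closure_subset_ground ∅
      refine hFround.2 (A ∪ L₂) (L₁ ∪ B) ?_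
      rw [hres]
      have eH1 : (A ∪ L₂) ∩ A = A := by
        ext a; simp only [mem_inter_iff, mem_union]
        constructor
        · rintro ⟨-, h⟩; exact h
        · exact fun h => ⟨Or.inl h, h⟩
      have eH2 : (A ∪ L₂) ∩ B = L₂ := by
        ext a; simp only [mem_inter_iff, mem_union]
        constructor
        · rintro ⟨h | h, hm⟩
          · exact absurd hm (hABd a h)
          · exact h
        · exact fun h => ⟨Or.inr h, hL₂B h⟩
      have eH'1 : (L₁ ∪ B) ∩ A = L₁ := by
        ext a; simp only [mem_inter_iff, mem_union]
        constructor
        · rintro ⟨h | h, hm⟩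
          · exact h
          · exact absurd hm (fun hm => hABd a hm h)
        · exact fun h => ⟨Or.inl h, hL₁A h⟩
      have eH'2 : (L₁ ∪ B) ∩ B = B := by
        ext a; simp only [mem_inter_iff, mem_union]
        constructor
        · rintro ⟨-, h⟩; exact h
        · exact fun h => ⟨Or.inr h, h⟩
      refine ⟨⟨?_, fun hc => ?_⟩, ⟨?_, fun hc => ?_⟩, ?_⟩
      · rw [disjointSum_flat_iff]
        rw [restrict_ground_eq, restrict_ground_eq, eH1, eH2]
        exact ⟨(M₁ ↾ A).ground_isFlat, (M₂ ↾ B).flat_closure' ∅,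
          union_subset subset_union_left (hL₂B.trans subset_union_right)⟩
      · rw [disjointSum_ground_eq, restrict_ground_eq, restrict_ground_eq] at hc
        have hBL : B ⊆ L₂ := by
          intro b hb
          have : b ∈ A ∪ L₂ := hc ▸ Or.inr hb
          rcases this with h | h
          · exact absurd hb (fun hb => hABd b h hb)
          · exact h
        have : (M₂ ↾ B).mRank B = 0 :=
          mRank_eq_zero_of_subset_loops (hL₂ ▸ hBL)
        rw [mRank_restrict, inter_self] at this
        exact hB0 this
      · rw [disjointSum_flat_iff]
        rw [restrict_ground_eq, restrict_ground_eq, eH'1, eH'2]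
        exact ⟨(M₁ ↾ A).flat_closure' ∅, (M₂ ↾ B).ground_isFlat,
          union_subset (hL₁A.trans subset_union_left) subset_union_right⟩
      · rw [disjointSum_ground_eq, restrict_ground_eq, restrict_ground_eq] at hc
        have hAL : A ⊆ L₁ := by
          intro b hb
          have : b ∈ L₁ ∪ B := hc ▸ Or.inl hb
          rcases this with h | h
          · exact h
          · exact absurd hb (fun hb => hABd b hb h)
        have : (M₁ ↾ A).mRank A = 0 :=
          mRank_eq_zero_of_subset_loops (hL₁ ▸ hAL)
        rw [mRank_restrict, inter_self] at this
        exact hA0 this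
      · rw [disjointSum_ground_eq, restrict_ground_eq, restrict_ground_eq]
        ext a
        simp only [mem_union]
        constructor
        · rintro ((h | h) | (h | h))
          · exact Or.inl h
          · exact Or.inr (hL₂B h)
          · exact Or.inl (hL₁A h)
          · exact Or.inr h
        · rintro (h | h)
          · exact Or.inl (Or.inl h)
          · exact Or.inr (Or.inr h)
    -- now the two symmetric cases
    rcases hz with h0 | h0
    · -- A has rank zero; B is a round flat of M₂
      have hmod1 : M₁.IsModularFlat A := modular_of_mRank_zero hF1 h0
      have hroundB : M₂.RoundSet B := by
        refine ⟨hBE, fun H H' hVC => ?_⟩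
        obtain ⟨⟨hHflat, hHne⟩, ⟨hH'flat, hH'ne⟩, hHunion⟩ := hVC
        rw [restrict_ground_eq] at hHunion hHne hH'ne
        have hHB : H ⊆ B := hHflat.subset_ground
        have hH'B : H' ⊆ B := hH'flat.subset_ground
        refine hFround.2 (A ∪ H) (A ∪ H') ?_
        rw [hres]
        have eX1 : (A ∪ H) ∩ A = A := by
          ext a; simp only [mem_inter_iff, mem_union]
          exact ⟨fun h => h.2, fun h => ⟨Or.inl h, h⟩⟩
        have eX2 : (A ∪ H) ∩ B = H := by
          ext a; simp only [mem_inter_iff, mem_union]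
          constructor
          · rintro ⟨h | h, hm⟩
            · exact absurd hm (hABd a h)
            · exact h
          · exact fun h => ⟨Or.inr h, hHB h⟩
        have eY1 : (A ∪ H') ∩ A = A := by
          ext a; simp only [mem_inter_iff, mem_union]
          exact ⟨fun h => h.2, fun h => ⟨Or.inl h, h⟩⟩
        have eY2 : (A ∪ H') ∩ B = H' := by
          ext a; simp only [mem_inter_iff, mem_union]
          constructor
          · rintro ⟨h | h, hm⟩
            · exact absurd hm (hABd a h)
            · exact h
          · exact fun h => ⟨Or.inr h, hH'B h⟩
        refine ⟨⟨?_, fun hc => ?_⟩, ⟨?_, fun hc => ?_⟩, ?_⟩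
        · rw [disjointSum_flat_iff, restrict_ground_eq, restrict_ground_eq, eX1, eX2]
          exact ⟨(M₁ ↾ A).ground_isFlat, hHflat,
            union_subset subset_union_left (hHB.trans subset_union_right)⟩
        · rw [disjointSum_ground_eq, restrict_ground_eq, restrict_ground_eq] at hc
          refine hHne (subset_antisymm hHB fun b hb => ?_)
          have : b ∈ A ∪ H := hc ▸ Or.inr hb
          rcases this with h | h
          · exact absurd hb (fun hb => hABd b h hb)
          · exact h
        · rw [disjointSum_flat_iff, restrict_ground_eq, restrict_ground_eq, eY1, eY2]
          exact ⟨(M₁ ↾ A).ground_isFlat, hH'flat,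
            union_subset subset_union_left (hH'B.trans subset_union_right)⟩
        · rw [disjointSum_ground_eq, restrict_ground_eq, restrict_ground_eq] at hc
          refine hH'ne (subset_antisymm hH'B fun b hb => ?_)
          have : b ∈ A ∪ H' := hc ▸ Or.inr hb
          rcases this with h | h
          · exact absurd hb (fun hb => hABd b h hb)
          · exact h
        · rw [disjointSum_ground_eq, restrict_ground_eq, restrict_ground_eq,
            ← union_union_distrib_left, hHunion]
      have hmod2 : M₂.IsModularFlat B := hSat₂ B hF2 hroundB
      exact (disjointSum_isModularFlat_iff hFflat).2 ⟨hmod1, hmod2⟩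
    · -- B has rank zero; A is a round flat of M₁
      have hmod2 : M₂.IsModularFlat B := modular_of_mRank_zero hF2 h0
      have hroundA : M₁.RoundSet A := by
        refine ⟨hAE, fun H H' hVC => ?_⟩
        obtain ⟨⟨hHflat, hHne⟩, ⟨hH'flat, hH'ne⟩, hHunion⟩ := hVC
        rw [restrict_ground_eq] at hHunion hHne hH'ne
        have hHA : H ⊆ A := hHflat.subset_ground
        have hH'A : H' ⊆ A := hH'flat.subset_ground
        refine hFround.2 (H ∪ B) (H' ∪ B) ?_
        rw [hres]
        have eX1 : (H ∪ B) ∩ A = H := by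
          ext a; simp only [mem_inter_iff, mem_union]
          constructor
          · rintro ⟨h | h, hm⟩
            · exact h
            · exact absurd hm (fun hm => hABd a hm h)
          · exact fun h => ⟨Or.inl h, hHA h⟩
        have eX2 : (H ∪ B) ∩ B = B := by
          ext a; simp only [mem_inter_iff, mem_union]
          exact ⟨fun h => h.2, fun h => ⟨Or.inr h, h⟩⟩
        have eY1 : (H' ∪ B) ∩ A = H' := by
          ext a; simp only [mem_inter_iff, mem_union]
          constructor
          · rintro ⟨h | h, hm⟩
            · exact h
            · exact absurd hm (fun hm => hABd a hm h)
          · exact fun h => ⟨Or.inl h, hH'A h⟩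
        have eY2 : (H' ∪ B) ∩ B = B := by
          ext a; simp only [mem_inter_iff, mem_union]
          exact ⟨fun h => h.2, fun h => ⟨Or.inr h, h⟩⟩
        refine ⟨⟨?_, fun hc => ?_⟩, ⟨?_, fun hc => ?_⟩, ?_⟩
        · rw [disjointSum_flat_iff, restrict_ground_eq, restrict_ground_eq, eX1, eX2]
          exact ⟨hHflat, (M₂ ↾ B).ground_isFlat,
            union_subset (hHA.trans subset_union_left) subset_union_right⟩
        · rw [disjointSum_ground_eq, restrict_ground_eq, restrict_ground_eq] at hc
          refine hHne (subset_antisymm hHA fun b hb => ?_)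
          have : b ∈ H ∪ B := hc ▸ Or.inl hb
          rcases this with h | h
          · exact h
          · exact absurd hb (fun hb => hABd b hb h)
        · rw [disjointSum_flat_iff, restrict_ground_eq, restrict_ground_eq, eY1, eY2]
          exact ⟨hH'flat, (M₂ ↾ B).ground_isFlat,
            union_subset (hH'A.trans subset_union_left) subset_union_right⟩
        · rw [disjointSum_ground_eq, restrict_ground_eq, restrict_ground_eq] at hc
          refine hH'ne (subset_antisymm hH'A fun b hb => ?_)
          have : b ∈ H' ∪ B := hc ▸ Or.inl hb
          rcases this with h | h
          · exact h
          · exact absurd hb (fun hb => hABd b hb h)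
        · rw [disjointSum_ground_eq, restrict_ground_eq, restrict_ground_eq,
            ← union_union_distrib_right, hHunion]
      have hmod1 : M₁.IsModularFlat A := hSat₁ A hF1 hroundA
      exact (disjointSum_isModularFlat_iff hFflat).2 ⟨hmod1, hmod2⟩

end Sum


section Circuits

variable {M : Matroid γ} {C C₁ C₂ D X I : Set γ} {e f x y z : γ}

lemma Circ.dep (hC : M.Circ C) : ¬ M.Indep C := hC.2.1

lemma Circ.subset_ground' (hC : M.Circ C) : C ⊆ M.E := hC.1

lemma Circ.eq_of_subset (hC : M.Circ C) (hC' : M.Circ C') (h : C' ⊆ C) : C' = C := by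
  by_contra hne
  exact hC'.dep (hC.2.2 C' (ssubset_of_ne_of_subset hne h))

lemma exists_circ_of_dep [M.Finite] (hX : X ⊆ M.E) (hdep : ¬ M.Indep X) :
    ∃ C ⊆ X, M.Circ C := by
  have hfin : X.Finite := M.set_finite X hX
  -- strong induction on ncard
  obtain ⟨n, hn⟩ : ∃ n, X.ncard = n := ⟨X.ncard, rfl⟩
  induction n using Nat.strong_induction_on generalizing X with
  | _ n ih =>
    by_cases hmin : ∀ D ⊂ X, M.Indep D
    · exact ⟨X, Subset.rfl, hX, hdep, hmin⟩
    · push_neg at hmin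
      obtain ⟨D, hDX, hDdep⟩ := hmin
      obtain ⟨C, hCD, hC⟩ := ih D.ncard (hn ▸ ncard_lt_ncard hDX hfin)
        (hDX.subset.trans hX) hDdep (hfin.subset hDX.subset) rfl
      exact ⟨C, hCD.trans hDX.subset, hC⟩

lemma Circ.diff_singleton_indep (hC : M.Circ C) (he : e ∈ C) : M.Indep (C \ {e}) :=
  hC.2.2 _ (sdiff_singleton_ssubset.2 he)

lemma Circ.mem_closure_diff_singleton (hC : M.Circ C) (he : e ∈ C) :
    e ∈ M.closure (C \ {e}) := by
  have hind := hC.diff_singleton_indep he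
  rw [hind.mem_closure_iff]
  by_cases heC : e ∈ C \ {e}
  · exact Or.inr heC
  left
  rw [Dep]
  have : insert e (C \ {e}) = C := by
    rw [insert_diff_singleton, insert_eq_of_mem he]
  rw [this]
  exact ⟨hC.dep, hC.subset_ground'⟩

lemma exists_circ_of_mem_closure [M.Finite] (hX : X ⊆ M.E) (he : e ∈ M.closure X)
    (heX : e ∉ X) : ∃ C, M.Circ C ∧ e ∈ C ∧ C ⊆ insert e X := by
  obtain ⟨I, hI⟩ := M.exists_isBasis X hX
  rw [← hI.closure_eq_closure] at he
  have heI : e ∉ I := fun h => heX (hI.subset h)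
  have hdep : ¬ M.Indep (insert e I) := by
    intro hind
    rw [hI.indep.mem_closure_iff'] at he
    exact heI (he.2 hind)
  have heE : e ∈ M.E := mem_ground_of_mem_closure he
  obtain ⟨C, hCI, hC⟩ := exists_circ_of_dep
    (insert_subset heE hI.indep.subset_ground) hdep
  refine ⟨C, hC, ?_, hCI.trans (insert_subset_insert hI.subset)⟩
  by_contra heC
  have : C ⊆ I := fun a ha => by
    rcases hCI ha with h | h
    · exact absurd (h ▸ ha) heC
    · exact h
  exact hC.dep (hI.indep.subset this)

lemma circ_strong_elimination [M.Finite] (hC₁ : M.Circ C₁) (hC₂ : M.Circ C₂)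
    (he : e ∈ C₁ ∩ C₂) (hf : f ∈ C₁ \ C₂) :
    ∃ C, M.Circ C ∧ f ∈ C ∧ C ⊆ (C₁ ∪ C₂) \ {e} := by
  set S := (C₁ ∪ C₂) \ {e, f} with hS
  have hSE : S ⊆ M.E := diff_subset.trans (union_subset hC₁.subset_ground' hC₂.subset_ground')
  have heS : e ∈ M.closure S := by
    have h1 : e ∈ M.closure (C₂ \ {e}) := hC₂.mem_closure_diff_singleton he.2
    refine M.closure_subset_closure ?_ h1
    intro a ha
    refine ⟨Or.inr ha.1, ?_⟩
    simp only [mem_insert_iff, mem_singleton_iff]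
    push_neg
    exact ⟨ha.2, fun haf => hf.2 (haf ▸ ha.1)⟩
  have hfS : f ∈ M.closure S := by
    have h1 : f ∈ M.closure (C₁ \ {f}) := hC₁.mem_closure_diff_singleton hf.1
    have h2 : C₁ \ {f} ⊆ insert e S := by
      intro a ha
      by_cases hae : a = e
      · exact Or.inl hae
      refine Or.inr ⟨Or.inl ha.1, ?_⟩
      simp only [mem_insert_iff, mem_singleton_iff]
      push_neg
      exact ⟨hae, ha.2⟩
    have h3 : M.closure (insert e S) = M.closure S := closure_insert_eq_of_mem_closure heS
    exact h3 ▸ (M.closure_subset_closure h2 h1)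
  have hfnS : f ∉ S := fun h => by
    have := h.2
    simp at this
  obtain ⟨C, hC, hfC, hCsub⟩ := exists_circ_of_mem_closure hSE hfS hfnS
  refine ⟨C, hC, hfC, hCsub.trans ?_⟩
  intro a ha
  rcases ha with rfl | ha
  · exact ⟨Or.inl hf.1, fun h => hf.2 (by rw [mem_singleton_iff] at h; exact absurd he.2 (h ▸ hf.2))⟩
  · refine ⟨ha.1, fun h => ?_⟩
    rw [mem_singleton_iff] at h
    exact (by simpa [h] using ha.2 : ¬ (e = e ∨ e = f)) (Or.inl rfl)


lemma circ_trans_aux [M.Finite] :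
    ∀ n C₁ C₂ x z, M.Circ C₁ → M.Circ C₂ → x ∈ C₁ → z ∈ C₂ → (C₁ ∩ C₂).Nonempty →
      (C₁ ∪ C₂).ncard ≤ n → ∃ C, M.Circ C ∧ x ∈ C ∧ z ∈ C := by
  intro n
  induction n using Nat.strong_induction_on with
  | _ n ih =>
  intro C₁ C₂ x z hC₁ hC₂ hx hz hint hcard
  have hfin : (C₁ ∪ C₂).Finite :=
    M.set_finite _ (union_subset hC₁.subset_ground' hC₂.subset_ground')
  by_cases hz1 : z ∈ C₁
  · exact ⟨C₁, hC₁, hx, hz1⟩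
  by_cases hx2 : x ∈ C₂
  · exact ⟨C₂, hC₂, hx2, hz⟩
  obtain ⟨e, he⟩ := hint
  -- C₃ : circuit containing z avoiding e
  obtain ⟨C₃, hC₃, hzC₃, hC₃sub⟩ :=
    circ_strong_elimination hC₂ hC₁ ⟨he.2, he.1⟩ ⟨hz, hz1⟩
  rw [union_comm C₂ C₁] at hC₃sub
  by_cases hxC₃ : x ∈ C₃
  · exact ⟨C₃, hC₃, hxC₃, hzC₃⟩
  -- C₄ : circuit containing x avoiding e
  obtain ⟨C₄, hC₄, hxC₄, hC₄sub⟩ := circ_strong_elimination hC₁ hC₂ he ⟨hx, hx2⟩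
  by_cases hzC₄ : z ∈ C₄
  · exact ⟨C₄, hC₄, hxC₄, hzC₄⟩
  have heC₃ : e ∉ C₃ := fun h => (hC₃sub h).2 rfl
  have heC₄ : e ∉ C₄ := fun h => (hC₄sub h).2 rfl
  have hC₃sub' : C₃ ⊆ C₁ ∪ C₂ := fun a ha => (hC₃sub ha).1
  have hC₄sub' : C₄ ⊆ C₁ ∪ C₂ := fun a ha => (hC₄sub ha).1
  have hC₃notsub : ¬ C₃ ⊆ C₂ := by
    intro hsub
    have := hC₂.eq_of_subset hC₃ hsub
    exact heC₃ (this ▸ he.2)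
  obtain ⟨w, hwC₃, hwC₂⟩ := not_subset.1 hC₃notsub
  have hwC₁ : w ∈ C₁ := by
    rcases hC₃sub' hwC₃ with h | h
    · exact h
    · exact absurd h hwC₂
  -- C₄ is not contained in C₁
  have hC₄notsub : ¬ C₄ ⊆ C₁ := by
    intro hsub
    have := hC₁.eq_of_subset hC₄ hsub
    exact heC₄ (this ▸ he.1)
  obtain ⟨u, huC₄, huC₁⟩ := not_subset.1 hC₄notsub
  have huC₂ : u ∈ C₂ := by
    rcases hC₄sub' huC₄ with h | h
    · exact absurd h huC₁
    · exact h
  -- first: pair (C₁, C₃)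
  rcases Nat.lt_or_ge (C₁ ∪ C₃).ncard (C₁ ∪ C₂).ncard with hlt | hge
  · exact ih (C₁ ∪ C₃).ncard (by omega) C₁ C₃ x z hC₁ hC₃ hx hzC₃ ⟨w, hwC₁, hwC₃⟩ le_rfl
  have heq13 : C₁ ∪ C₃ = C₁ ∪ C₂ := by
    refine eq_of_subset_of_ncard_le (union_subset subset_union_left hC₃sub') ?_ hfin
    exact hge
  have hsub23 : ∀ a ∈ C₂, a ∉ C₁ → a ∈ C₃ := by
    intro a ha hna
    have : a ∈ C₁ ∪ C₃ := heq13 ▸ (Or.inr ha : a ∈ C₁ ∪ C₂)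
    rcases this with h | h
    · exact absurd h hna
    · exact h
  -- pair (C₄, C₂)
  rcases Nat.lt_or_ge (C₄ ∪ C₂).ncard (C₁ ∪ C₂).ncard with hlt | hge2
  · exact ih (C₄ ∪ C₂).ncard (by omega) C₄ C₂ x z hC₄ hC₂ hxC₄ hz ⟨u, huC₄, huC₂⟩ le_rfl
  have heq42 : C₄ ∪ C₂ = C₁ ∪ C₂ := by
    refine eq_of_subset_of_ncard_le (union_subset hC₄sub' subset_union_right) ?_ hfin
    exact hge2
  have hsub14 : ∀ a ∈ C₁, a ∉ C₂ → a ∈ C₄ := by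
    intro a ha hna
    have : a ∈ C₄ ∪ C₂ := heq42 ▸ (Or.inl ha : a ∈ C₁ ∪ C₂)
    rcases this with h | h
    · exact h
    · exact absurd h hna
  -- final pair (C₄, C₃): strictly smaller union
  have hwC₄ : w ∈ C₄ := hsub14 w hwC₁ hwC₂
  have hss : C₄ ∪ C₃ ⊂ C₁ ∪ C₂ := by
    refine ssubset_of_subset_of_ne (union_subset hC₄sub' hC₃sub') ?_
    intro hcon
    have : e ∈ C₄ ∪ C₃ := hcon ▸ (Or.inl he.1 : e ∈ C₁ ∪ C₂)
    rcases this with h | h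
    · exact heC₄ h
    · exact heC₃ h
  have hlt : (C₄ ∪ C₃).ncard < (C₁ ∪ C₂).ncard := ncard_lt_ncard hss hfin
  exact ih (C₄ ∪ C₃).ncard (by omega) C₄ C₃ x z hC₄ hC₃ hxC₄ hzC₃ ⟨w, hwC₄, hwC₃⟩ le_rfl

lemma connRel_symm (h : M.connRel x y) : M.connRel y x := by
  rcases h with rfl | ⟨C, hC, hx, hy⟩
  · exact Or.inl rfl
  · exact Or.inr ⟨C, hC, hy, hx⟩

lemma connRel_trans [M.Finite] (hxy : M.connRel x y) (hyz : M.connRel y z) :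
    M.connRel x z := by
  rcases hxy with rfl | ⟨C₁, hC₁, hx, hy₁⟩
  · exact hyz
  rcases hyz with rfl | ⟨C₂, hC₂, hy₂, hz⟩
  · exact Or.inr ⟨C₁, hC₁, hx, hy₁⟩
  exact Or.inr (circ_trans_aux (C₁ ∪ C₂).ncard C₁ C₂ x z hC₁ hC₂ hx hz ⟨y, hy₁, hy₂⟩ le_rfl)


lemma circ_restrict_iff {X : Set γ} (hX : X ⊆ M.E) :
    (M ↾ X).Circ C ↔ M.Circ C ∧ C ⊆ X := by
  constructor
  · rintro ⟨hCX, hdep, hmin⟩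
    rw [restrict_ground_eq] at hCX
    refine ⟨⟨hCX.trans hX, fun hind => hdep (restrict_indep_iff.2 ⟨hind, hCX⟩), fun D hD => ?_⟩, hCX⟩
    exact (restrict_indep_iff.1 (hmin D hD)).1
  · rintro ⟨⟨hCE, hdep, hmin⟩, hCX⟩
    refine ⟨by rwa [restrict_ground_eq], fun hind => hdep (restrict_indep_iff.1 hind).1,
      fun D hD => restrict_indep_iff.2 ⟨hmin D hD, hD.subset.trans hCX⟩⟩

lemma class_circ_closed [M.Finite] {K : Set γ} (hK : M.Circ K)
    (hy : y ∈ K) (hyC : y ∈ {w | w ∈ M.E ∧ M.connRel x w}) :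
    K ⊆ {w | w ∈ M.E ∧ M.connRel x w} :=
  fun w hw => ⟨hK.1 hw, connRel_trans hyC.2 (Or.inr ⟨K, hK, hy, hw⟩)⟩

lemma class_eq_of_mem [M.Finite] (hy : y ∈ {w | w ∈ M.E ∧ M.connRel x w}) :
    {w | w ∈ M.E ∧ M.connRel y w} = {w | w ∈ M.E ∧ M.connRel x w} := by
  ext w
  exact ⟨fun hw => ⟨hw.1, connRel_trans hy.2 hw.2⟩,
    fun hw => ⟨hw.1, connRel_trans (connRel_symm hy.2) hw.2⟩⟩

lemma class_subset_diff [M.Finite] {C : Set γ} (hC : C = {w | w ∈ M.E ∧ M.connRel x w})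
    (hy : y ∈ M.E \ C) : {w | w ∈ M.E ∧ M.connRel y w} ⊆ M.E \ C := by
  rintro w ⟨hwE, hrel⟩
  rcases hrel with rfl | ⟨K, hK, hyK, hwK⟩
  · exact hy
  refine ⟨hwE, fun hwC => hy.2 ?_⟩
  rw [hC]
  exact class_circ_closed hK hwK (hC ▸ hwC) hyK

lemma class_restrict_eq [M.Finite] {C : Set γ} (hC : C = {w | w ∈ M.E ∧ M.connRel x w})
    (hy : y ∈ M.E \ C) :
    {w | w ∈ (M ↾ (M.E \ C)).E ∧ (M ↾ (M.E \ C)).connRel y w} =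
      {w | w ∈ M.E ∧ M.connRel y w} := by
  have hDE : M.E \ C ⊆ M.E := diff_subset
  ext w
  constructor
  · rintro ⟨hwD, hrel⟩
    rw [restrict_ground_eq] at hwD
    rcases hrel with rfl | ⟨K, hK, hyK, hwK⟩
    · exact ⟨hwD.1, Or.inl rfl⟩
    · obtain ⟨hKM, -⟩ := (circ_restrict_iff hDE).1 hK
      exact ⟨hwD.1, Or.inr ⟨K, hKM, hyK, hwK⟩⟩
  · rintro ⟨hwE, hrel⟩
    rcases hrel with rfl | ⟨K, hK, hyK, hwK⟩
    · exact ⟨by rw [restrict_ground_eq]; exact hy, Or.inl rfl⟩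
    have hKD : K ⊆ M.E \ C := by
      intro a haK
      refine ⟨hK.1 haK, fun haC => hy.2 ?_⟩
      rw [hC]
      exact class_circ_closed hK haK (hC ▸ haC) hyK
    exact ⟨by rw [restrict_ground_eq]; exact hKD hwK,
      Or.inr ⟨K, (circ_restrict_iff hDE).2 ⟨hK, hKD⟩, hyK, hwK⟩⟩

lemma eq_disjointSum_of_class [M.Finite] {C : Set γ}
    (hC : C = {w | w ∈ M.E ∧ M.connRel x w})
    (hdj' : Disjoint (M ↾ C).E (M ↾ (M.E \ C)).E) :
    M = (M ↾ C).disjointSum (M ↾ (M.E \ C)) hdj' := by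
  have hCE : C ⊆ M.E := by rw [hC]; exact fun y hy => hy.1
  rw [ext_iff_indep]
  constructor
  · rw [disjointSum_ground_eq, restrict_ground_eq, restrict_ground_eq,
      union_diff_cancel hCE]
  · intro I hIE
    rw [disjointSum_indep_iff, restrict_indep_iff, restrict_indep_iff,
      restrict_ground_eq, restrict_ground_eq, union_diff_cancel hCE]
    constructor
    · intro hI
      exact ⟨⟨hI.subset inter_subset_left, inter_subset_right⟩,
        ⟨hI.subset inter_subset_left, inter_subset_right⟩, hIE⟩
    · rintro ⟨⟨h1, -⟩, ⟨h2, -⟩, -⟩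
      by_contra hdep
      obtain ⟨K, hKI, hK⟩ := exists_circ_of_dep hIE hdep
      by_cases hKC : (K ∩ C).Nonempty
      · obtain ⟨y, hyK, hyC⟩ := hKC
        have hKsub : K ⊆ C := by
          rw [hC]
          exact class_circ_closed hK hyK (hC ▸ hyC)
        exact hK.dep (h1.subset (subset_inter hKI hKsub))
      · have hKsub : K ⊆ M.E \ C := by
          intro a haK
          exact ⟨hK.1 haK, fun haC => hKC ⟨a, haK, haC⟩⟩
        exact hK.dep (h2.subset (subset_inter hKI hKsub))

lemma supersolvable_of_mRk_zero [M.Finite] (h : M.mRk = 0) : M.Supersolvable := by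
  refine ⟨fun _ => M.closure ∅, fun i hi => ?_, fun i hi => by omega⟩
  rw [h] at hi
  have hrk : M.mRank (M.closure ∅) = 0 := mRank_eq_zero_of_subset_loops Subset.rfl
  interval_cases i
  exact ⟨modular_of_mRank_zero (M.flat_closure' ∅) hrk, hrk⟩

lemma saturated_of_mRk_zero [M.Finite] (h : M.mRk = 0) : M.Saturated := by
  intro F hF _
  exact modular_of_mRank_zero hF (Nat.eq_zero_of_le_zero (h ▸ mRank_mono hF.subset_ground))

lemma mRk_zero_of_ground_empty (hE : M.E = ∅) : M.mRk = 0 := by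
  rw [mRk, hE, mRank_empty]

end Circuits


lemma components_iff :
    ∀ (n : ℕ) (M : Matroid γ), M.Finite → M.E.ncard ≤ n →
      ((M.Supersolvable ↔ ∀ x ∈ M.E, (M ↾ {y | y ∈ M.E ∧ M.connRel x y}).Supersolvable) ∧
       (M.Saturated ↔ ∀ x ∈ M.E, (M ↾ {y | y ∈ M.E ∧ M.connRel x y}).Saturated)) := by
  intro n
  induction n using Nat.strong_induction_on with
  | _ n ihn =>
  intro M hMfin hcard
  haveI := hMfin
  by_cases hE : M.E = ∅
  · refine ⟨iff_of_true (supersolvable_of_mRk_zero (mRk_zero_of_ground_empty hE)) ?_,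
      iff_of_true (saturated_of_mRk_zero (mRk_zero_of_ground_empty hE)) ?_⟩ <;>
    · intro x hx
      rw [hE] at hx
      exact absurd hx (notMem_empty x)
  · obtain ⟨x, hx⟩ := nonempty_iff_ne_empty.2 hE
    set C : Set γ := {y | y ∈ M.E ∧ M.connRel x y} with hC
    have hCE : C ⊆ M.E := fun y hy => hy.1
    have hxC : x ∈ C := ⟨hx, Or.inl rfl⟩
    by_cases hCeq : C = M.E
    · -- single component
      have hclass : ∀ y ∈ M.E, {w | w ∈ M.E ∧ M.connRel y w} = M.E := by
        intro y hy
        have hyC : y ∈ C := hCeq ▸ hy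
        rw [class_eq_of_mem (hC ▸ hyC), ← hC, hCeq]
      constructor
      · constructor
        · intro h y hy
          rw [hclass y hy, restrict_ground_eq_self]
          exact h
        · intro h
          have := h x hx
          rwa [hclass x hx, restrict_ground_eq_self] at this
      · constructor
        · intro h y hy
          rw [hclass y hy, restrict_ground_eq_self]
          exact h
        · intro h
          have := h x hx
          rwa [hclass x hx, restrict_ground_eq_self] at this
    · set D : Set γ := M.E \ C with hD
      have hDE : D ⊆ M.E := diff_subset
      haveI hCfin : (M ↾ C).Finite := restrict_finite' hCE
      haveI hDfin : (M ↾ D).Finite := restrict_finite' hDE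
      have hdj' : Disjoint (M ↾ C).E (M ↾ D).E := by
        rw [restrict_ground_eq, restrict_ground_eq, hD]
        exact disjoint_sdiff_right
      have hsum : M = (M ↾ C).disjointSum (M ↾ D) hdj' := eq_disjointSum_of_class hC hdj'
      have hDcard : D.ncard < n := by
        have hss : D ⊂ M.E := ⟨hDE, fun hsub => (hsub hx).2 hxC⟩
        have := ncard_lt_ncard hss M.ground_finite
        omega
      obtain ⟨ihSS, ihSat⟩ := ihn D.ncard hDcard (M ↾ D) hDfin le_rfl
      -- identification of classes of the restriction to D
      have hresD : ∀ y ∈ D, (M ↾ D) ↾ {w | w ∈ (M ↾ D).E ∧ (M ↾ D).connRel y w} =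
          M ↾ {w | w ∈ M.E ∧ M.connRel y w} := by
        intro y hy
        rw [class_restrict_eq hC (hD ▸ hy)]
        exact restrict_restrict_eq M (class_subset_diff hC (hD ▸ hy))
      have hsplitSS : (∀ y ∈ M.E, (M ↾ {w | w ∈ M.E ∧ M.connRel y w}).Supersolvable) ↔
          ((M ↾ C).Supersolvable ∧ ∀ y ∈ D, (M ↾ {w | w ∈ M.E ∧ M.connRel y w}).Supersolvable) := by
        constructor
        · intro h
          exact ⟨h x hx, fun y hy => h y (hDE hy)⟩
        · rintro ⟨h1, h2⟩ y hy
          by_cases hyC : y ∈ C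
          · rw [class_eq_of_mem (hC ▸ hyC)]
            exact h1
          · exact h2 y ⟨hy, hyC⟩
      have hsplitSat : (∀ y ∈ M.E, (M ↾ {w | w ∈ M.E ∧ M.connRel y w}).Saturated) ↔
          ((M ↾ C).Saturated ∧ ∀ y ∈ D, (M ↾ {w | w ∈ M.E ∧ M.connRel y w}).Saturated) := by
        constructor
        · intro h
          exact ⟨h x hx, fun y hy => h y (hDE hy)⟩
        · rintro ⟨h1, h2⟩ y hy
          by_cases hyC : y ∈ C
          · rw [class_eq_of_mem (hC ▸ hyC)]
            exact h1
          · exact h2 y ⟨hy, hyC⟩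
      have hDiffSS : (M ↾ D).Supersolvable ↔
          ∀ y ∈ D, (M ↾ {w | w ∈ M.E ∧ M.connRel y w}).Supersolvable := by
        rw [ihSS]
        constructor
        · intro h y hy
          have := h y (by rw [restrict_ground_eq]; exact hy)
          rwa [hresD y hy] at this
        · intro h y hy
          rw [restrict_ground_eq] at hy
          rw [hresD y hy]
          exact h y hy
      have hDiffSat : (M ↾ D).Saturated ↔
          ∀ y ∈ D, (M ↾ {w | w ∈ M.E ∧ M.connRel y w}).Saturated := by
        rw [ihSat]
        constructor
        · intro h y hy
          have := h y (by rw [restrict_ground_eq]; exact hy)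
          rwa [hresD y hy] at this
        · intro h y hy
          rw [restrict_ground_eq] at hy
          rw [hresD y hy]
          exact h y hy
      have hssM := disjointSum_supersolvable_iff (M₁ := M ↾ C) (M₂ := M ↾ D) (hdj := hdj')
      have hsatM := disjointSum_saturated_iff (M₁ := M ↾ C) (M₂ := M ↾ D) (hdj := hdj')
      rw [← hsum] at hssM hsatM
      refine ⟨?_, ?_⟩
      · rw [hssM, hsplitSS, hDiffSS]
      · rw [hsatM, hsplitSat, hDiffSat]

end Matroid


open Matroid

/-- A matroid is supersolvable (respectively saturated) if and only if each of its connected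
components is supersolvable (respectively saturated); in particular, a direct sum `M₁ ⊕ M₂`
is supersolvable (respectively saturated) if and only if both summands are. -/
theorem supersolvable_saturated_components {α : Type*} {β : Type*} (M : Matroid α) [M.Finite]
    (M₁ M₂ : Matroid β) [M₁.Finite] [M₂.Finite] (hdj : Disjoint M₁.E M₂.E) :
    (M.Supersolvable ↔ ∀ x ∈ M.E, (M ↾ {y | y ∈ M.E ∧ M.connRel x y}).Supersolvable) ∧
    (M.Saturated ↔ ∀ x ∈ M.E, (M ↾ {y | y ∈ M.E ∧ M.connRel x y}).Saturated) ∧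
    ((M₁.disjointSum M₂ hdj).Supersolvable ↔ M₁.Supersolvable ∧ M₂.Supersolvable) ∧
    ((M₁.disjointSum M₂ hdj).Saturated ↔ M₁.Saturated ∧ M₂.Saturated) := by
  refine ⟨(components_iff M.E.ncard M ‹M.Finite› le_rfl).1,
    (components_iff M.E.ncard M ‹M.Finite› le_rfl).2,
    disjointSum_supersolvable_iff (hdj := hdj),
    disjointSum_saturated_iff (hdj := hdj)⟩
end
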